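/- arXiv:2508.14714 — 3 statements merged into one kernel-verified Lean document; each statement's English description precedes it below -/
import Mathlib

section
/- Let n ≥ 4 be an integer, let z : ZMod n → ℂ be injective, and let {i,j} be a chord. Then the primitive u-relation holds identically: u_{ij}(z) + ∏_{e ∈ E, e crosses {i,j}} u_e(z) = 1. -/
namespace M0n

/-- `{i, j}` is a chord of the `n`-gon: `j ∉ {i-1, i, i+1}`. -/
def IsChord (n : ℕ) (p : Sym2 (ZMod n)) : Prop :=
  ∀ i j : ZMod n, p = s(i, j) → j ≠ i - 1 ∧ j ≠ i ∧ j ≠ i + 1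

instance (n : ℕ) [NeZero n] : DecidablePred (IsChord n) := fun p =>
  inferInstanceAs (Decidable (∀ i j : ZMod n, p = s(i, j) → j ≠ i - 1 ∧ j ≠ i ∧ j ≠ i + 1))

/-- The finite set `E` of chords of the `n`-gon. -/
def chords (n : ℕ) [NeZero n] : Finset (Sym2 (ZMod n)) :=
  Finset.univ.filter (IsChord n)

/-- `x` lies in the cyclic open interval `{i+1, …, j-1}` from `i` to `j`. -/
def CycBtw {n : ℕ} (i x j : ZMod n) : Prop :=
  0 < (x - i).val ∧ (x - i).val < (j - i).val

instance {n : ℕ} (i x j : ZMod n) : Decidable (CycBtw i x j) :=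
  inferInstanceAs (Decidable (0 < (x - i).val ∧ (x - i).val < (j - i).val))

/-- Two chords cross: exactly one endpoint of `q` lies in the cyclic open interval
from `i` to `j`, for every ordered representation `(i, j)` of `p`. -/
def Crosses (n : ℕ) (p q : Sym2 (ZMod n)) : Prop :=
  ∀ i j k l : ZMod n, p = s(i, j) → q = s(k, l) → Xor' (CycBtw i k j) (CycBtw i l j)

instance (n : ℕ) [NeZero n] (p q : Sym2 (ZMod n)) : Decidable (Crosses n p q) :=
  inferInstanceAs (Decidable (∀ i j k l : ZMod n,
    p = s(i, j) → q = s(k, l) →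
      ((CycBtw i k j ∧ ¬CycBtw i l j) ∨ (CycBtw i l j ∧ ¬CycBtw i k j))))

/-- The dihedral coordinate (cross-ratio)
`u_{ij}(z) = ((z i - z (j+1)) (z (i+1) - z j)) / ((z i - z j) (z (i+1) - z (j+1)))`,
well defined on unordered pairs. -/
def u {n : ℕ} {K : Type*} [Field K] (z : ZMod n → K) : Sym2 (ZMod n) → K :=
  Sym2.lift ⟨fun i j =>
    ((z i - z (j + 1)) * (z (i + 1) - z j)) / ((z i - z j) * (z (i + 1) - z (j + 1))), by
      intro i j
      have h1 : (z i - z (j + 1)) * (z (i + 1) - z j)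
          = (z j - z (i + 1)) * (z (j + 1) - z i) := by ring
      have h2 : (z i - z j) * (z (i + 1) - z (j + 1))
          = (z j - z i) * (z (j + 1) - z (i + 1)) := by ring
      dsimp only
      rw [h1, h2]⟩

/-- The cyclic interval `{a, a+1, …, a+m-1}` in `ZMod n`. -/
def cycInt {n : ℕ} (a : ZMod n) (m : ℕ) : Finset (ZMod n) :=
  (Finset.range m).image fun t : ℕ => a + (t : ZMod n)

/-- A partition of `ZMod n` into four nonempty cyclic intervals `A, B, C, D`
appearing in this cyclic order. -/
structure CyclicFourPartition (n : ℕ) where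
  a : ZMod n
  p : ℕ
  q : ℕ
  r : ℕ
  t : ℕ
  hp : 0 < p
  hq : 0 < q
  hr : 0 < r
  ht : 0 < t
  hsum : p + q + r + t = n

namespace CyclicFourPartition

variable {n : ℕ} (P : CyclicFourPartition n)

def A : Finset (ZMod n) := cycInt P.a P.p
def B : Finset (ZMod n) := cycInt (P.a + (P.p : ZMod n)) P.q
def C : Finset (ZMod n) := cycInt (P.a + (P.p : ZMod n) + (P.q : ZMod n)) P.r
def D : Finset (ZMod n) := cycInt (P.a + (P.p : ZMod n) + (P.q : ZMod n) + (P.r : ZMod n)) P.t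

end CyclicFourPartition

/-- A sign pattern is consistent if it does not contradict any extended u-relation:
for every cyclic 4-partition `(A,B,C,D)`, one of the two products of signs is `1`. -/
def Consistent (n : ℕ) (s : Sym2 (ZMod n) → ℤ) : Prop :=
  ∀ P : CyclicFourPartition n,
    (∏ x ∈ P.A, ∏ y ∈ P.C, s s(x, y)) = 1 ∨ (∏ x ∈ P.B, ∏ y ∈ P.D, s s(x, y)) = 1

/-- A sign pattern is realizable if it is the sign vector of the dihedral coordinates
of some injective real configuration. -/
def Realizable (n : ℕ) [NeZero n] (s : Sym2 (ZMod n) → ℤ) : Prop :=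
  ∃ z : ZMod n → ℝ, Function.Injective z ∧ ∀ e ∈ chords n, Real.sign (u z e) = (s e : ℝ)

/-- The length of a chord `{i,j}`: `min (d, n - d)` where `d = (j - i).val`. -/
def chordLength (n : ℕ) (p : Sym2 (ZMod n)) : ℕ :=
  Sym2.lift ⟨fun i j => min (j - i).val (i - j).val, fun _ _ => min_comm _ _⟩ p

/-- `Neg z`: the number of negative chords of a real configuration. -/
noncomputable def negCount (n : ℕ) [NeZero n] (z : ZMod n → ℝ) : ℕ :=
  Set.ncard {e : Sym2 (ZMod n) | e ∈ chords n ∧ u z e < 0}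

/-- The set of real points of `M_{0,n}` in its dihedral embedding:
nowhere-zero real solutions of all primitive u-relations in `ℝ^E`. -/
def Vset (n : ℕ) [NeZero n] : Set ({e : Sym2 (ZMod n) // e ∈ chords n} → ℝ) :=
  {w | (∀ c, w c ≠ 0) ∧ ∀ c,
    w c + ∏ e ∈ Finset.univ.filter
        (fun e : {e : Sym2 (ZMod n) // e ∈ chords n} => Crosses n e.1 c.1), w e = 1}

/-- The part `M_{0,n}(ℝ_s)` of `V` in the open orthant given by the sign pattern `s`. -/
def VsSet (n : ℕ) [NeZero n] (s : Sym2 (ZMod n) → ℤ) :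
    Set ({e : Sym2 (ZMod n) // e ∈ chords n} → ℝ) :=
  {w ∈ Vset n | ∀ c : {e : Sym2 (ZMod n) // e ∈ chords n}, Real.sign (w c) = (s c.1 : ℝ)}

set_option linter.unusedSectionVars false

section PrimAux

variable {n : ℕ} [NeZero n]

private lemma M0n_sub_val (a b : ℕ) (hb : b ≤ n) :
    ((a : ZMod n) - b).val = (a + n - b) % n := by
  have h : (a : ZMod n) - b = ((a + n - b : ℕ) : ZMod n) := by
    have hb' : b ≤ a + n := by omega
    rw [Nat.cast_sub hb']
    push_cast
    rw [ZMod.natCast_self]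
    ring
  rw [h, ZMod.val_natCast]

private lemma M0n_pt_ne (i : ZMod n) (a b : ℕ) (h : a % n ≠ b % n) :
    i + (a : ZMod n) ≠ i + b := by
  intro hab
  exact h (by rw [← ZMod.val_natCast n a, ← ZMod.val_natCast n b, add_left_cancel hab])

private lemma M0n_cycBtw_base (i : ZMod n) (x b : ℕ) (hx : x < n) (hb : b < n) :
    CycBtw i (i + (x : ZMod n)) (i + (b : ZMod n)) ↔ 0 < x ∧ x < b := by
  unfold CycBtw
  rw [add_sub_cancel_left, add_sub_cancel_left, ZMod.val_cast_of_lt hx, ZMod.val_cast_of_lt hb]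

private lemma M0n_cycBtw (i : ZMod n) (s x b : ℕ) (hs : s ≤ n) :
    CycBtw (i + (s : ZMod n)) (i + (x : ZMod n)) (i + (b : ZMod n)) ↔
      0 < (x + n - s) % n ∧ (x + n - s) % n < (b + n - s) % n := by
  unfold CycBtw
  have e1 : (i + (x : ZMod n)) - (i + s) = (x : ZMod n) - s := by ring
  have e2 : (i + (b : ZMod n)) - (i + s) = (b : ZMod n) - s := by ring
  rw [e1, e2, M0n_sub_val x s hs, M0n_sub_val b s hs]

private lemma M0n_cycBtw_midbase (i : ZMod n) (s b : ℕ) (hs : s ≤ n) :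
    CycBtw (i + (s : ZMod n)) i (i + (b : ZMod n)) ↔
      0 < (0 + n - s) % n ∧ (0 + n - s) % n < (b + n - s) % n := by
  unfold CycBtw
  have e1 : i - (i + (s : ZMod n)) = ((0 : ℕ) : ZMod n) - s := by simp
  have e2 : (i + (b : ZMod n)) - (i + s) = (b : ZMod n) - s := by ring
  rw [e1, e2, M0n_sub_val 0 s hs, M0n_sub_val b s hs]

private lemma M0n_mod (n s x : ℕ) (hs : s < n) (hx : x < n) :
    (x + n - s) % n = if s ≤ x then x - s else x + n - s := by
  split
  · next h =>
    have e : x + n - s = (x - s) + n := by omega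
    rw [e, Nat.add_mod_right, Nat.mod_eq_of_lt (by omega)]
  · next h => exact Nat.mod_eq_of_lt (by omega)

private lemma M0n_telescope (f : ℕ → ℂ) (a b : ℕ) (hab : a ≤ b)
    (hf : ∀ t, a ≤ t → t ≤ b → f t ≠ 0) :
    ∏ t ∈ Finset.Ico a b, f t / f (t + 1) = f a / f b := by
  induction b, hab using Nat.le_induction with
  | base => rw [Finset.Ico_self, Finset.prod_empty, div_self (hf a le_rfl le_rfl)]
  | succ b hab ih =>
    rw [Finset.prod_Ico_succ_top hab,
      ih (fun t ht ht' => hf t ht (ht'.trans (Nat.le_succ b)))]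
    have h1 : f b ≠ 0 := hf b hab (Nat.le_succ b)
    have h2 : f (b + 1) ≠ 0 := hf (b + 1) (by omega) le_rfl
    field_simp

end PrimAux

/-- For `n ≥ 4`, an injective `z : ZMod n → ℂ` and a chord `{i,j}`,
the primitive u-relation holds:
`u_{ij}(z) + ∏_{e ∈ E, e crosses {i,j}} u_e(z) = 1`. -/
theorem primitive_u_relation (n : ℕ) [NeZero n] (hn : 4 ≤ n) (z : ZMod n → ℂ)
    (hz : Function.Injective z) (i j : ZMod n) (hij : s(i, j) ∈ chords n) :
    u z s(i, j) + ∏ e ∈ (chords n).filter (fun e => Crosses n e s(i, j)), u z e = 1 := by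
  classical
  have hch := (Finset.mem_filter.mp hij).2
  obtain ⟨h1, h2, h3⟩ := hch i j rfl
  have hdval : (((j - i).val : ℕ) : ZMod n) = j - i := ZMod.natCast_rightInverse _
  set d := (j - i).val with hd
  have hdn : d < n := ZMod.val_lt _
  have hji : j = i + (d : ZMod n) := by rw [hdval]; ring
  have hd0 : d ≠ 0 := by
    intro h
    apply h2
    rw [h] at hdval
    push_cast at hdval
    exact (sub_eq_zero.mp hdval.symm)
  have hd1 : d ≠ 1 := by
    intro h
    apply h3
    rw [hji, h]
    norm_num
  have hdn1 : d ≠ n - 1 := by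
    intro h
    apply h1
    rw [hji, h]
    have e : ((n - 1 : ℕ) : ZMod n) = -1 := by
      rw [Nat.cast_sub (Nat.one_le_iff_ne_zero.mpr (NeZero.ne n)), ZMod.natCast_self]
      push_cast
      ring
    rw [e]
    ring
  have h2d : 2 ≤ d := by omega
  have hdn2 : d + 2 ≤ n := by omega
  set w : ℕ → ℂ := fun t => z (i + (t : ZMod n)) with hw
  have hwz : ∀ t : ℕ, z (i + (t : ZMod n)) = w t := fun t => by rw [hw]
  have hne : ∀ s t : ℕ, s < t → t ≤ n → t - s < n → w s - w t ≠ 0 := by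
    intro s t hst htn hts
    refine sub_ne_zero.mpr (fun he => ?_)
    refine M0n_pt_ne i s t ?_ (hz he)
    rcases eq_or_lt_of_le htn with rfl | h'
    · rw [Nat.mod_self, Nat.mod_eq_of_lt (by omega)]
      omega
    · rw [Nat.mod_eq_of_lt (by omega), Nat.mod_eq_of_lt h']
      omega
  have hne' : ∀ s t : ℕ, s < t → t ≤ n → t - s < n → w t - w s ≠ 0 :=
    fun s t a b c => sub_ne_zero.mpr (Ne.symm (sub_ne_zero.mp (hne s t a b c)))
  have hwn : w n = w 0 := by
    rw [hw]
    simp [ZMod.natCast_self]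
  have hrep0 : s(i, j) = s(i + ((0 : ℕ) : ZMod n), i + ((d : ℕ) : ZMod n)) := by
    rw [hji]
    norm_num
  -- the set of crossing chords
  have hset : (chords n).filter (fun e => Crosses n e s(i, j)) =
      ((Finset.Ico 1 d) ×ˢ (Finset.Ico (d + 1) n)).image
        (fun p : ℕ × ℕ => s(i + (p.1 : ZMod n), i + (p.2 : ZMod n))) := by
    ext e
    induction e using Sym2.ind with
    | _ k l =>
    simp only [Finset.mem_filter, Finset.mem_image, Finset.mem_product, Finset.mem_Ico,
      chords, Finset.mem_univ, true_and]
    constructor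
    · rintro ⟨hchord, hcross⟩
      obtain ⟨a, b, han, hbn, hk, hl⟩ : ∃ a b : ℕ, a < n ∧ b < n ∧
          k = i + (a : ZMod n) ∧ l = i + (b : ZMod n) :=
        ⟨(k - i).val, (l - i).val, ZMod.val_lt _, ZMod.val_lt _,
          by rw [ZMod.natCast_rightInverse]; ring, by rw [ZMod.natCast_rightInverse]; ring⟩
      subst hk hl
      have X1 := hcross _ _ _ _ rfl hrep0
      have X2 := hcross (i + (b : ZMod n)) (i + (a : ZMod n)) _ _ Sym2.eq_swap hrep0
      rw [M0n_cycBtw i a 0 b (by omega), M0n_cycBtw i a d b (by omega)] at X1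
      rw [M0n_cycBtw i b 0 a (by omega), M0n_cycBtw i b d a (by omega)] at X2
      rw [M0n_mod n a 0 han (by omega), M0n_mod n a b han hbn, M0n_mod n a d han hdn] at X1
      rw [M0n_mod n b 0 hbn (by omega), M0n_mod n b a hbn han, M0n_mod n b d hbn hdn] at X2
      have key : (1 ≤ a ∧ a < d ∧ d + 1 ≤ b ∧ b < n) ∨
          (1 ≤ b ∧ b < d ∧ d + 1 ≤ a ∧ a < n) := by
        simp only [Xor', Xor] at X1 X2
        split_ifs at X1 X2 <;> omega
      rcases key with ⟨k1, k2, k3, k4⟩ | ⟨k1, k2, k3, k4⟩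
      · exact ⟨(a, b), ⟨⟨k1, k2⟩, ⟨k3, k4⟩⟩, rfl⟩
      · exact ⟨(b, a), ⟨⟨k1, k2⟩, ⟨k3, k4⟩⟩, Sym2.eq_swap⟩
    · rintro ⟨⟨a, b⟩, ⟨⟨ha1, ha2⟩, ⟨hb1, hb2⟩⟩, hrep⟩
      rw [← hrep]
      have han : a < n := by omega
      constructor
      · -- IsChord
        intro x y hxy
        rw [Sym2.eq_iff] at hxy
        rcases hxy with ⟨rfl, rfl⟩ | ⟨rfl, rfl⟩
        · refine ⟨?_, ?_, ?_⟩
          · have e : i + (a : ZMod n) - 1 = i + ((a - 1 : ℕ) : ZMod n) := by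
              rw [Nat.cast_sub (by omega : 1 ≤ a)]
              push_cast
              ring
            rw [e]
            exact M0n_pt_ne i b (a - 1)
              (by rw [Nat.mod_eq_of_lt hb2, Nat.mod_eq_of_lt (by omega)]; omega)
          · exact M0n_pt_ne i b a
              (by rw [Nat.mod_eq_of_lt hb2, Nat.mod_eq_of_lt han]; omega)
          · have e : i + (a : ZMod n) + 1 = i + ((a + 1 : ℕ) : ZMod n) := by
              push_cast
              ring
            rw [e]
            exact M0n_pt_ne i b (a + 1)
              (by rw [Nat.mod_eq_of_lt hb2, Nat.mod_eq_of_lt (by omega)]; omega)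
        · refine ⟨?_, ?_, ?_⟩
          · have e : i + (b : ZMod n) - 1 = i + ((b - 1 : ℕ) : ZMod n) := by
              rw [Nat.cast_sub (by omega : 1 ≤ b)]
              push_cast
              ring
            rw [e]
            exact M0n_pt_ne i a (b - 1)
              (by rw [Nat.mod_eq_of_lt han, Nat.mod_eq_of_lt (by omega)]; omega)
          · exact M0n_pt_ne i a b
              (by rw [Nat.mod_eq_of_lt han, Nat.mod_eq_of_lt hb2]; omega)
          · have e : i + (b : ZMod n) + 1 = i + ((b + 1 : ℕ) : ZMod n) := by
              push_cast
              ring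
            rw [e]
            refine M0n_pt_ne i a (b + 1) ?_
            rcases eq_or_lt_of_le (show b + 1 ≤ n by omega) with h | h
            · rw [h, Nat.mod_self, Nat.mod_eq_of_lt han]
              omega
            · rw [Nat.mod_eq_of_lt han, Nat.mod_eq_of_lt h]
              omega
      · -- Crosses
        intro p1 p2 q1 q2 hp hq
        rw [Sym2.eq_iff] at hp hq
        rcases hp with ⟨rfl, rfl⟩ | ⟨rfl, rfl⟩ <;>
          rcases hq with ⟨rfl, rfl⟩ | ⟨rfl, rfl⟩ <;>
        · rw [hji]
          simp only [Xor', Xor, M0n_cycBtw_midbase i a b (by omega),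
            M0n_cycBtw_midbase i b a (by omega),
            M0n_cycBtw i a d b (by omega), M0n_cycBtw i b d a (by omega),
            M0n_mod n a 0 han (by omega), M0n_mod n a b han hb2,
            M0n_mod n a d han hdn, M0n_mod n b 0 hb2 (by omega),
            M0n_mod n b a hb2 han, M0n_mod n b d hb2 hdn]
          split_ifs <;> omega
  rw [hset, Finset.prod_image ?hinj]
  case hinj =>
    rintro ⟨a, b⟩ hp ⟨c, e⟩ hq h
    simp only [Finset.coe_product, Set.mem_prod, Finset.mem_coe, Finset.mem_product, Finset.mem_Ico] at hp hq
    rw [Sym2.eq_iff] at h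
    have hcast : ∀ x y : ℕ, x < n → y < n → i + (x : ZMod n) = i + y → x = y := by
      intro x y hx hy hxy
      have := add_left_cancel hxy
      calc x = ((x : ZMod n)).val := (ZMod.val_cast_of_lt hx).symm
        _ = ((y : ZMod n)).val := by rw [this]
        _ = y := ZMod.val_cast_of_lt hy
    rcases h with ⟨e1, e2⟩ | ⟨e1, e2⟩
    · obtain rfl := hcast a c (by omega) (by omega) e1
      obtain rfl := hcast b e (by omega) (by omega) e2
      rfl
    · have := hcast a e (by omega) (by omega) e1
      have := hcast b c (by omega) (by omega) e2
      exfalso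
      omega
  rw [Finset.prod_product (f := fun p : ℕ × ℕ => u z s(i + (p.1 : ZMod n), i + (p.2 : ZMod n)))]
  -- pointwise value of u on crossing chords
  have hstepb : ∀ a b : ℕ, 1 ≤ a → a < d → d + 1 ≤ b → b < n →
      u z s(i + (a : ZMod n), i + (b : ZMod n)) =
        ((w (a + 1) - w b) / (w a - w b)) /
          ((w (a + 1) - w (b + 1)) / (w a - w (b + 1))) := by
    intro a b ha1 ha2 hb1 hb2
    simp only [u, Sym2.lift_mk]
    have e1 : z (i + (a : ZMod n) + 1) = w (a + 1) := by
      rw [← hwz]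
      apply congrArg
      push_cast
      ring
    have e2 : z (i + (b : ZMod n) + 1) = w (b + 1) := by
      rw [← hwz]
      apply congrArg
      push_cast
      ring
    rw [e1, e2, hwz a, hwz b]
    have n1 : w a - w b ≠ 0 := hne a b (by omega) (by omega) (by omega)
    have n2 : w a - w (b + 1) ≠ 0 := hne a (b + 1) (by omega) (by omega) (by omega)
    have n3 : w (a + 1) - w (b + 1) ≠ 0 := hne (a + 1) (b + 1) (by omega) (by omega) (by omega)
    field_simp
  have hinner : ∀ a : ℕ, 1 ≤ a → a < d →
      ∏ b ∈ Finset.Ico (d + 1) n, u z s(i + (a : ZMod n), i + (b : ZMod n)) =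
        ((w a - w 0) / (w a - w (d + 1))) / ((w (a + 1) - w 0) / (w (a + 1) - w (d + 1))) := by
    intro a ha1 ha2
    have hg : ∀ t, d + 1 ≤ t → t ≤ n →
        (fun t => (w (a + 1) - w t) / (w a - w t)) t ≠ 0 := by
      intro t ht1 ht2
      exact div_ne_zero (hne (a + 1) t (by omega) (by omega) (by omega))
        (hne a t (by omega) (by omega) (by omega))
    calc ∏ b ∈ Finset.Ico (d + 1) n, u z s(i + (a : ZMod n), i + (b : ZMod n))
        = ∏ b ∈ Finset.Ico (d + 1) n,
            ((fun t => (w (a + 1) - w t) / (w a - w t)) b /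
              (fun t => (w (a + 1) - w t) / (w a - w t)) (b + 1)) := by
          refine Finset.prod_congr rfl (fun b hb => ?_)
          rw [Finset.mem_Ico] at hb
          exact hstepb a b ha1 ha2 hb.1 hb.2
      _ = (fun t => (w (a + 1) - w t) / (w a - w t)) (d + 1) /
            (fun t => (w (a + 1) - w t) / (w a - w t)) n :=
          M0n_telescope _ (d + 1) n (by omega) hg
      _ = ((w a - w 0) / (w a - w (d + 1))) /
            ((w (a + 1) - w 0) / (w (a + 1) - w (d + 1))) := by
          show ((w (a + 1) - w (d + 1)) / (w a - w (d + 1))) /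
            ((w (a + 1) - w n) / (w a - w n)) = _
          rw [hwn]
          have n1 : w a - w (d + 1) ≠ 0 := hne a (d + 1) (by omega) (by omega) (by omega)
          have n2 : w a - w 0 ≠ 0 := hne' 0 a (by omega) (by omega) (by omega)
          have n3 : w (a + 1) - w 0 ≠ 0 := hne' 0 (a + 1) (by omega) (by omega) (by omega)
          have n4 : w (a + 1) - w (d + 1) ≠ 0 :=
            hne (a + 1) (d + 1) (by omega) (by omega) (by omega)
          field_simp
  have hF : ∀ t, 1 ≤ t → t ≤ d → (fun t => (w t - w 0) / (w t - w (d + 1))) t ≠ 0 := by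
    intro t ht1 ht2
    exact div_ne_zero (hne' 0 t (by omega) (by omega) (by omega))
      (hne t (d + 1) (by omega) (by omega) (by omega))
  have houter : ∏ a ∈ Finset.Ico 1 d, ∏ b ∈ Finset.Ico (d + 1) n,
      u z s(i + (a : ZMod n), i + (b : ZMod n)) =
      ((w 1 - w 0) / (w 1 - w (d + 1))) / ((w d - w 0) / (w d - w (d + 1))) := by
    calc ∏ a ∈ Finset.Ico 1 d, ∏ b ∈ Finset.Ico (d + 1) n,
          u z s(i + (a : ZMod n), i + (b : ZMod n))
        = ∏ a ∈ Finset.Ico 1 d,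
            ((fun t => (w t - w 0) / (w t - w (d + 1))) a /
              (fun t => (w t - w 0) / (w t - w (d + 1))) (a + 1)) := by
          refine Finset.prod_congr rfl (fun a ha => ?_)
          rw [Finset.mem_Ico] at ha
          exact hinner a ha.1 ha.2
      _ = (fun t => (w t - w 0) / (w t - w (d + 1))) 1 /
            (fun t => (w t - w 0) / (w t - w (d + 1))) d :=
          M0n_telescope _ 1 d (by omega) hF
      _ = _ := rfl
  rw [houter]
  have hu : u z s(i, j) =
      ((w 0 - w (d + 1)) * (w 1 - w d)) / ((w 0 - w d) * (w 1 - w (d + 1))) := by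
    simp only [u, Sym2.lift_mk]
    have e0 : z i = w 0 := by rw [hw]; norm_num
    have e1 : z (i + 1) = w 1 := by rw [hw]; norm_num
    have e2 : z j = w d := by rw [hw, hji]
    have e3 : z (j + 1) = w (d + 1) := by
      rw [hw, hji]
      show z _ = z _
      apply congrArg
      push_cast
      ring
    rw [e0, e1, e2, e3]
  rw [hu]
  have N1 : w 0 - w d ≠ 0 := hne 0 d (by omega) (by omega) (by omega)
  have N2 : w 1 - w (d + 1) ≠ 0 := hne 1 (d + 1) (by omega) (by omega) (by omega)
  have N3 : w d - w 0 ≠ 0 := hne' 0 d (by omega) (by omega) (by omega)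
  have N4 : w d - w (d + 1) ≠ 0 := hne d (d + 1) (by omega) (by omega) (by omega)
  have N5 : w 1 - w 0 ≠ 0 := hne' 0 1 (by omega) (by omega) (by omega)
  field_simp
  ring


end M0n
end

section
/- Let n ≥ 4 be an integer. The number of realizable sign patterns is (n−1)!/2; that is, 2 · #{s : E → {−1,1} | s is realizable} = (n−1)!. -/
namespace M0n

section Toolkit

variable {n : ℕ} [NeZero n]

lemma val_pos_of_ne {a : ZMod n} (h : a ≠ 0) : 0 < a.val := by
  rcases Nat.eq_zero_or_pos a.val with h0 | h0
  · exact absurd (ZMod.val_injective n (by simpa using h0)) h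
  · exact h0

lemma val_neg' {a : ZMod n} (h : a ≠ 0) : (-a).val = n - a.val := by
  have hadd : (a + (-a)).val = (a.val + (-a).val) % n := ZMod.val_add a (-a)
  simp only [add_neg_cancel, ZMod.val_zero] at hadd
  have h1 : 0 < a.val := val_pos_of_ne h
  have h2 : 0 < (-a).val := val_pos_of_ne (by simpa using h)
  have h3 : a.val < n := ZMod.val_lt a
  have h4 : (-a).val < n := ZMod.val_lt (-a)
  have hdvd : n ∣ (a.val + (-a).val) := Nat.dvd_of_mod_eq_zero hadd.symm
  rcases hdvd with ⟨k, hk⟩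
  match k, hk with
  | 0, hk => omega
  | 1, hk => omega
  | (k+2), hk =>
    have : n * (k + 2) = n * k + 2 * n := by ring
    omega

/-- value of a difference -/
lemma val_sub' (x a : ZMod n) :
    (x - a).val = if a.val ≤ x.val then x.val - a.val else x.val + n - a.val := by
  by_cases h : a = 0
  · subst h; simp [ZMod.val_zero]
  · have hxa : x - a = x + (-a) := by ring
    rw [hxa, ZMod.val_add]
    rw [val_neg' h]
    have h1 : 0 < a.val := val_pos_of_ne h
    have h3 : a.val < n := ZMod.val_lt a
    have h4 : x.val < n := ZMod.val_lt x
    by_cases hle : a.val ≤ x.val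
    · rw [if_pos hle]
      have : x.val + (n - a.val) = (x.val - a.val) + n := by omega
      rw [this, Nat.add_mod_right, Nat.mod_eq_of_lt (by omega)]
    · rw [if_neg hle]
      have : x.val + (n - a.val) = x.val + n - a.val := by omega
      rw [this, Nat.mod_eq_of_lt (by omega)]

/-- characterization of CycBtw via vals -/
lemma cycBtw_iff {a x b : ZMod n} (hxa : x ≠ a) (hxb : x ≠ b) (hab : a ≠ b) :
    CycBtw a x b ↔
      (if a.val < b.val then a.val < x.val ∧ x.val < b.val
       else ¬ (b.val < x.val ∧ x.val < a.val)) := by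
  have e1 := val_sub' x a
  have e2 := val_sub' b a
  have hva : x.val ≠ a.val := fun h => hxa (ZMod.val_injective n h)
  have hvb : x.val ≠ b.val := fun h => hxb (ZMod.val_injective n h)
  have hvab : a.val ≠ b.val := fun h => hab (ZMod.val_injective n h)
  have h3 : a.val < n := ZMod.val_lt a
  have h4 : x.val < n := ZMod.val_lt x
  have h5 : b.val < n := ZMod.val_lt b
  unfold CycBtw
  rw [e1, e2]
  split_ifs at * <;> omega

end Toolkit
section RealLemmas

/-- product of two nonzeros negative iff exactly one negative -/
lemma mul_neg_iff_xor {x y : ℝ} (hx : x ≠ 0) (hy : y ≠ 0) :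
    x * y < 0 ↔ Xor' (x < 0) (y < 0) := by
  rcases lt_or_gt_of_ne hx with h | h <;> rcases lt_or_gt_of_ne hy with h' | h'
  · have hp := mul_pos_of_neg_of_neg h h'
    simp only [Xor']
    constructor
    · intro hc; linarith
    · rintro (⟨h1, h2⟩ | ⟨h1, h2⟩) <;> simp at h2 <;> linarith
  · have hp := mul_neg_of_neg_of_pos h h'
    simp only [Xor']
    constructor
    · intro _; exact Or.inl ⟨h, by linarith⟩
    · intro _; exact hp
  · have hp := mul_neg_of_pos_of_neg h h'
    simp only [Xor']
    constructor
    · intro _; exact Or.inr ⟨h', by linarith⟩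
    · intro _; exact hp
  · have hp := mul_pos h h'
    simp only [Xor']
    constructor
    · intro hc; linarith
    · rintro (⟨h1, h2⟩ | ⟨h1, h2⟩) <;> linarith

/-- the quadruple product -/
noncomputable def PP (a b c d : ℝ) : ℝ := (c - a) * (c - b) * ((d - a) * (d - b))

lemma PP_ne_zero {a b c d : ℝ} (h1 : c ≠ a) (h2 : c ≠ b) (h3 : d ≠ a) (h4 : d ≠ b) :
    PP a b c d ≠ 0 := by
  unfold PP
  have := sub_ne_zero.2 h1; have := sub_ne_zero.2 h2
  have := sub_ne_zero.2 h3; have := sub_ne_zero.2 h4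
  positivity

lemma PP_neg_iff {a b c d : ℝ} (h1 : c ≠ a) (h2 : c ≠ b) (h3 : d ≠ a) (h4 : d ≠ b) :
    PP a b c d < 0 ↔ Xor' (Xor' (c < a) (c < b)) (Xor' (d < a) (d < b)) := by
  have e1 : (c - a) * (c - b) ≠ 0 :=
    mul_ne_zero (sub_ne_zero.2 h1) (sub_ne_zero.2 h2)
  have e2 : (d - a) * (d - b) ≠ 0 :=
    mul_ne_zero (sub_ne_zero.2 h3) (sub_ne_zero.2 h4)
  unfold PP
  rw [mul_neg_iff_xor e1 e2, mul_neg_iff_xor (sub_ne_zero.2 h1) (sub_ne_zero.2 h2),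
    mul_neg_iff_xor (sub_ne_zero.2 h3) (sub_ne_zero.2 h4)]
  simp [sub_neg]

/-- among the three pairings of 4 distinct reals, exactly the "middle" one:
`PP a c b d < 0 ↔ ¬ PP a b c d < 0 ∧ ¬ PP a d b c < 0`. -/
lemma PP_one_of_three {a b c d : ℝ} (hab : a ≠ b) (hac : a ≠ c) (had : a ≠ d)
    (hbc : b ≠ c) (hbd : b ≠ d) (hcd : c ≠ d) :
    PP a c b d < 0 ↔ ¬ PP a b c d < 0 ∧ ¬ PP a d b c < 0 := by
  set A := a - c with hA
  set B := b - d with hB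
  set C := a - d with hC
  set D := b - c with hD
  set E := c - d with hE
  set F := a - b with hF
  have hA0 : A ≠ 0 := sub_ne_zero.2 hac
  have hB0 : B ≠ 0 := sub_ne_zero.2 hbd
  have hC0 : C ≠ 0 := sub_ne_zero.2 had
  have hD0 : D ≠ 0 := sub_ne_zero.2 hbc
  have hE0 : E ≠ 0 := sub_ne_zero.2 hcd
  have hF0 : F ≠ 0 := sub_ne_zero.2 hab
  have hx : PP a b c d = (A * B) * (C * D) := by unfold PP; rw [hA, hB, hC, hD]; ring
  have hy : PP a d b c = (A * B) * (E * F) := by unfold PP; rw [hA, hB, hE, hF]; ring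
  have hsum : (A * B) * (C * D) + (A * B) * (E * F) = (A * B) * (A * B) := by
    rw [hA, hB, hC, hD, hE, hF]; ring
  have hm : (A * B) * (A * B) * PP a c b d = -(((A*B)*(C*D)) * ((A*B)*(E*F))) := by
    unfold PP; rw [hA, hB, hC, hD, hE, hF]; ring
  have hAB : 0 < (A*B)*(A*B) := mul_self_pos.2 (mul_ne_zero hA0 hB0)
  set x := (A * B) * (C * D) with hxx
  set y := (A * B) * (E * F) with hyy
  have hx0 : x ≠ 0 := mul_ne_zero (mul_ne_zero hA0 hB0) (mul_ne_zero hC0 hD0)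
  have hy0 : y ≠ 0 := mul_ne_zero (mul_ne_zero hA0 hB0) (mul_ne_zero hE0 hF0)
  rw [hx, hy]
  constructor
  · intro hmneg
    have hxy : 0 < x * y := by nlinarith
    constructor <;> intro hneg <;> nlinarith
  · rintro ⟨hxn, hyn⟩
    have hxpos : 0 < x := lt_of_le_of_ne (not_lt.1 hxn) (Ne.symm hx0)
    have hypos : 0 < y := lt_of_le_of_ne (not_lt.1 hyn) (Ne.symm hy0)
    nlinarith

end RealLemmas

section Bridge

variable {n : ℕ} [NeZero n]

/-- separation of `{c,d}` by the chord `{a,b}` -/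
def SepC (a b c d : ZMod n) : Prop := Xor' (CycBtw a c b) (CycBtw a d b)

/-- The bridge: separation in `ZMod n` is the negativity of the real quadruple product
of the values. -/
lemma sepC_iff_PP {a b c d : ZMod n} (hab : a ≠ b) (hac : a ≠ c) (had : a ≠ d)
    (hbc : b ≠ c) (hbd : b ≠ d) (hcd : c ≠ d) :
    SepC a b c d ↔ PP (a.val : ℝ) (b.val : ℝ) (c.val : ℝ) (d.val : ℝ) < 0 := by
  have hvals : ∀ x y : ZMod n, x ≠ y → x.val ≠ y.val := fun x y h hv =>
    h (ZMod.val_injective n hv)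
  rw [PP_neg_iff (by exact_mod_cast (hvals c a hac.symm : _))
      (by exact_mod_cast (hvals c b hbc.symm : _))
      (by exact_mod_cast (hvals d a had.symm : _))
      (by exact_mod_cast (hvals d b hbd.symm : _))]
  rw [SepC, cycBtw_iff hac.symm hbc.symm hab, cycBtw_iff had.symm hbd.symm hab]
  simp only [Xor', xor_def, Nat.cast_lt]
  have hca := hvals c a hac.symm
  have hcb := hvals c b hbc.symm
  have hda := hvals d a had.symm
  have hdb := hvals d b hbd.symm
  have hab' := hvals a b hab
  split_ifs with h <;> constructor <;> intro hh <;> omega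

end Bridge
section SepCLemmas

variable {n : ℕ} [NeZero n]

/-- PP only depends on the unordered pairing. -/
lemma PP_eq_1 (a b c d : ℝ) : PP a b c d = PP b a c d := by unfold PP; ring
lemma PP_eq_2 (a b c d : ℝ) : PP a b c d = PP a b d c := by unfold PP; ring
lemma PP_eq_swap (a b c d : ℝ) : PP a b c d = PP c d a b := by unfold PP; ring

lemma sepC_comm_left {a b c d : ZMod n} (hab : a ≠ b) (hac : a ≠ c) (had : a ≠ d)
    (hbc : b ≠ c) (hbd : b ≠ d) (hcd : c ≠ d) :
    SepC a b c d ↔ SepC b a c d := by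
  rw [sepC_iff_PP hab hac had hbc hbd hcd, sepC_iff_PP hab.symm hbc hbd hac had hcd,
    PP_eq_1]

lemma sepC_comm_right {a b c d : ZMod n} (hab : a ≠ b) (hac : a ≠ c) (had : a ≠ d)
    (hbc : b ≠ c) (hbd : b ≠ d) (hcd : c ≠ d) :
    SepC a b c d ↔ SepC a b d c := by
  rw [sepC_iff_PP hab hac had hbc hbd hcd, sepC_iff_PP hab had hac hbd hbc hcd.symm,
    PP_eq_2]

lemma sepC_swap {a b c d : ZMod n} (hab : a ≠ b) (hac : a ≠ c) (had : a ≠ d)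
    (hbc : b ≠ c) (hbd : b ≠ d) (hcd : c ≠ d) :
    SepC a b c d ↔ SepC c d a b := by
  rw [sepC_iff_PP hab hac had hbc hbd hcd, sepC_iff_PP hcd hac.symm hbc.symm had.symm
    hbd.symm hab, PP_eq_swap]

/-- of the three pairings of four distinct points on the circle, exactly one separates. -/
lemma sepC_one_of_three {a b c d : ZMod n} (hab : a ≠ b) (hac : a ≠ c) (had : a ≠ d)
    (hbc : b ≠ c) (hbd : b ≠ d) (hcd : c ≠ d) :
    SepC a c b d ↔ ¬ SepC a b c d ∧ ¬ SepC a d b c := by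
  rw [sepC_iff_PP hac hab had hbc.symm hcd hbd,
    sepC_iff_PP hab hac had hbc hbd hcd,
    sepC_iff_PP had hab hac hbd.symm hcd.symm hbc]
  have hvals : ∀ x y : ZMod n, x ≠ y → (x.val : ℝ) ≠ (y.val : ℝ) := fun x y h hv =>
    h (ZMod.val_injective n (by exact_mod_cast hv))
  exact PP_one_of_three (hvals a b hab) (hvals a c hac) (hvals a d had)
    (hvals b c hbc) (hvals b d hbd) (hvals c d hcd)

/-- translation invariance -/
lemma cycBtw_shift (t a x b : ZMod n) : CycBtw (t + a) (t + x) (t + b) ↔ CycBtw a x b := by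
  unfold CycBtw
  have h1 : t + x - (t + a) = x - a := by ring
  have h2 : t + b - (t + a) = b - a := by ring
  rw [h1, h2]

lemma sepC_shift (t : ZMod n) (a b c d : ZMod n) :
    SepC (t + a) (t + b) (t + c) (t + d) ↔ SepC a b c d := by
  unfold SepC
  simp only [Xor', xor_def] at *
  simp only [cycBtw_shift]

/-- reflection sends the interval `(a,b)` to the interval `(-b,-a)` -/
lemma cycBtw_neg {a x b : ZMod n} (hxa : x ≠ a) (hxb : x ≠ b) (hab : a ≠ b) :
    CycBtw (-a) (-x) (-b) ↔ CycBtw b x a := by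
  unfold CycBtw
  have h1 : -x - -a = a - x := by ring
  have h2 : -b - -a = a - b := by ring
  rw [h1, h2]
  rw [val_sub' a x, val_sub' a b, val_sub' x b]
  have hva : x.val ≠ a.val := fun h => hxa (ZMod.val_injective n h)
  have hvb : x.val ≠ b.val := fun h => hxb (ZMod.val_injective n h)
  have hvab : a.val ≠ b.val := fun h => hab (ZMod.val_injective n h)
  have h3 : a.val < n := ZMod.val_lt a
  have h4 : x.val < n := ZMod.val_lt x
  have h5 : b.val < n := ZMod.val_lt b
  split_ifs <;> omega

lemma sepC_neg {a b c d : ZMod n} (hab : a ≠ b) (hac : a ≠ c) (had : a ≠ d)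
    (hbc : b ≠ c) (hbd : b ≠ d) (hcd : c ≠ d) :
    SepC (-a) (-b) (-c) (-d) ↔ SepC a b c d := by
  have step1 : SepC (-a) (-b) (-c) (-d) ↔ SepC b a c d := by
    unfold SepC
    simp only [Xor', xor_def]
    rw [cycBtw_neg hac.symm hbc.symm hab, cycBtw_neg had.symm hbd.symm hab]
  rw [step1]
  exact (sepC_comm_left hab hac had hbc hbd hcd).symm

end SepCLemmas
section ChordFacts

variable {n : ℕ} [NeZero n]

lemma one_ne_zero' (hn : 4 ≤ n) : (1 : ZMod n) ≠ 0 := by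
  intro h
  have : ((1 : ℕ) : ZMod n) = 0 := by exact_mod_cast h
  have h2 := (ZMod.natCast_eq_zero_iff 1 n).1 this
  have := Nat.le_of_dvd one_pos h2
  omega

lemma two_ne_zero' (hn : 4 ≤ n) : (2 : ZMod n) ≠ 0 := by
  intro h
  have : ((2 : ℕ) : ZMod n) = 0 := by exact_mod_cast h
  have h2 := (ZMod.natCast_eq_zero_iff 2 n).1 this
  have := Nat.le_of_dvd two_pos h2
  omega

lemma val_one' (hn : 4 ≤ n) : (1 : ZMod n).val = 1 := by
  have : ((1 : ℕ) : ZMod n).val = 1 := ZMod.val_cast_of_lt (by omega)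
  simpa using this

lemma eq_of_val_eq {a b : ZMod n} (h : a.val = b.val) : a = b := ZMod.val_injective n h

lemma val_eq_one_iff (hn : 4 ≤ n) {x : ZMod n} : x.val = 1 ↔ x = 1 := by
  constructor
  · intro h; exact eq_of_val_eq (by rw [h, val_one' hn])
  · intro h; rw [h, val_one' hn]

lemma val_neg_one (hn : 4 ≤ n) : (-1 : ZMod n).val = n - 1 := by
  rw [val_neg' (one_ne_zero' hn), val_one' hn]

/-- chord membership in terms of the val of the difference -/
lemma mem_chords_iff (hn : 4 ≤ n) (i j : ZMod n) :
    s(i, j) ∈ chords n ↔ 2 ≤ (j - i).val ∧ (j - i).val ≤ n - 2 := by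
  have hlt : (j - i).val < n := ZMod.val_lt _
  constructor
  · intro h
    have hic : IsChord n s(i, j) := (Finset.mem_filter.1 h).2
    obtain ⟨h1, h2, h3⟩ := hic i j rfl
    have e0 : (j - i).val ≠ 0 := by
      intro h0
      exact h2 (sub_eq_zero.1 (eq_of_val_eq (by simpa using h0)))
    have e1 : (j - i).val ≠ 1 := by
      intro h0
      have hji : j - i = 1 := (val_eq_one_iff hn).1 h0
      rw [sub_eq_iff_eq_add] at hji
      exact h3 (by rw [hji]; ring)
    have e2 : (j - i).val ≠ n - 1 := by
      intro h0
      have : j - i = -1 := eq_of_val_eq (by rw [h0, val_neg_one hn])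
      exact h1 (by rw [sub_eq_iff_eq_add] at this; rw [this]; ring)
    omega
  · rintro ⟨hl, hr⟩
    refine Finset.mem_filter.2 ⟨Finset.mem_univ _, ?_⟩
    have key : ∀ a b : ZMod n, 2 ≤ (b - a).val → (b - a).val ≤ n - 2 →
        b ≠ a - 1 ∧ b ≠ a ∧ b ≠ a + 1 := by
      intro a b u1 u2
      refine ⟨?_, ?_, ?_⟩
      · intro h; rw [h] at u1 u2
        have : a - 1 - a = -1 := by ring
        rw [this, val_neg_one hn] at u1 u2; omega
      · intro h; rw [h] at u1; simp [ZMod.val_zero] at u1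
      · intro h; rw [h] at u1
        have : a + 1 - a = 1 := by ring
        rw [this, val_one' hn] at u1; omega
    intro i' j' hp
    rcases Sym2.eq_iff.1 hp with ⟨rfl, rfl⟩ | ⟨rfl, rfl⟩
    · exact key i j hl hr
    · have hv : (j - i).val = n - (i - j).val := by
        have hne : i - j ≠ 0 := by
          intro h0; rw [show j - i = -(i-j) by ring, h0] at hl
          simp [ZMod.val_zero] at hl
        have : j - i = -(i - j) := by ring
        rw [this, val_neg' hne]
      exact key j i (by omega) (by omega)

/-- distinctness of the four endpoints of a chord -/
lemma chord_distinct (hn : 4 ≤ n) {i j : ZMod n} (h : s(i, j) ∈ chords n) :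
    i ≠ i + 1 ∧ i ≠ j ∧ i ≠ j + 1 ∧ i + 1 ≠ j ∧ i + 1 ≠ j + 1 ∧ j ≠ j + 1 := by
  obtain ⟨h1, h2, h3⟩ := (Finset.mem_filter.1 h).2 i j rfl
  have hone := one_ne_zero' hn
  refine ⟨?_, ?_, ?_, ?_, ?_, ?_⟩
  · intro hh; exact hone (by linear_combination -hh)
  · exact fun hh => h2 hh.symm
  · intro hh; exact h1 (by rw [hh]; ring)
  · exact fun hh => h3 hh.symm
  · intro hh; exact h2 (by linear_combination -hh)
  · intro hh; exact hone (by linear_combination -hh)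

end ChordFacts

section USign

variable {n : ℕ} [NeZero n]

lemma u_apply {K : Type*} [Field K] (z : ZMod n → K) (i j : ZMod n) :
    u z s(i, j) = ((z i - z (j + 1)) * (z (i + 1) - z j)) /
      ((z i - z j) * (z (i + 1) - z (j + 1))) := by
  simp [u]

lemma div_neg_iff_mul_neg {N D : ℝ} (hD : D ≠ 0) : N / D < 0 ↔ N * D < 0 := by
  rw [div_neg_iff, mul_neg_iff]

/-- sign of `u` in terms of the quadruple product. -/
lemma u_sign (hn : 4 ≤ n) {z : ZMod n → ℝ} (hz : Function.Injective z)
    {i j : ZMod n} (h : s(i, j) ∈ chords n) :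
    u z s(i, j) ≠ 0 ∧
      (u z s(i, j) < 0 ↔ PP (z i) (z (i + 1)) (z j) (z (j + 1)) < 0) := by
  obtain ⟨d1, d2, d3, d4, d5, d6⟩ := chord_distinct hn h
  have f1 : z i - z (j + 1) ≠ 0 := sub_ne_zero.2 (fun hh => d3 (hz hh))
  have f2 : z (i + 1) - z j ≠ 0 := sub_ne_zero.2 (fun hh => d4 (hz hh))
  have f3 : z i - z j ≠ 0 := sub_ne_zero.2 (fun hh => d2 (hz hh))
  have f4 : z (i + 1) - z (j + 1) ≠ 0 := sub_ne_zero.2 (fun hh => d5 (hz hh))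
  rw [u_apply]
  constructor
  · exact div_ne_zero (mul_ne_zero f1 f2) (mul_ne_zero f3 f4)
  · rw [div_neg_iff_mul_neg (mul_ne_zero f3 f4)]
    have : (z i - z (j + 1)) * (z (i + 1) - z j) * ((z i - z j) * (z (i + 1) - z (j + 1)))
        = PP (z i) (z (i + 1)) (z j) (z (j + 1)) := by unfold PP; ring
    rw [this]

end USign
section FpDef

variable {n : ℕ} [NeZero n]

/-- standard configuration realizing the order `σ` -/
noncomputable def zmap (σ : Equiv.Perm (ZMod n)) : ZMod n → ℝ := fun k => ((σ k).val : ℝ)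

lemma zmap_injective (σ : Equiv.Perm (ZMod n)) : Function.Injective (zmap σ) := by
  intro a b h
  have h' : ((σ a).val : ℝ) = ((σ b).val : ℝ) := h
  exact σ.injective (ZMod.val_injective n (by exact_mod_cast h'))

open Classical in
/-- the sign pattern of the configuration attached to `σ` -/
noncomputable def Fp (σ : Equiv.Perm (ZMod n)) : Sym2 (ZMod n) → ℤ := fun e =>
  if e ∈ chords n ∧ u (zmap σ) e < 0 then -1 else 1

lemma Fp_off_chord {σ : Equiv.Perm (ZMod n)} {e : Sym2 (ZMod n)} (h : e ∉ chords n) :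
    Fp σ e = 1 := by
  rw [Fp, if_neg (by tauto)]

lemma Fp_on_chord (hn : 4 ≤ n) {σ : Equiv.Perm (ZMod n)} {i j : ZMod n}
    (h : s(i, j) ∈ chords n) :
    (Fp σ s(i, j) = -1 ↔ SepC (σ i) (σ (i + 1)) (σ j) (σ (j + 1))) ∧
    (Fp σ s(i, j) = 1 ↔ ¬ SepC (σ i) (σ (i + 1)) (σ j) (σ (j + 1))) := by
  obtain ⟨d1, d2, d3, d4, d5, d6⟩ := chord_distinct hn h
  obtain ⟨hne, hiff⟩ := u_sign hn (zmap_injective σ) h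
  have hsep : SepC (σ i) (σ (i + 1)) (σ j) (σ (j + 1)) ↔ u (zmap σ) s(i, j) < 0 := by
    rw [hiff]
    exact sepC_iff_PP (fun hh => d1 (σ.injective hh)) (fun hh => d2 (σ.injective hh))
      (fun hh => d3 (σ.injective hh)) (fun hh => d4 (σ.injective hh))
      (fun hh => d5 (σ.injective hh)) (fun hh => d6 (σ.injective hh))
  rw [Fp]
  constructor
  · constructor
    · intro hf
      by_cases hc : s(i, j) ∈ chords n ∧ u (zmap σ) s(i, j) < 0
      · exact hsep.2 hc.2
      · rw [if_neg hc] at hf; norm_num at hf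
    · intro hs
      rw [if_pos ⟨h, hsep.1 hs⟩]
  · constructor
    · intro hf hs
      rw [if_pos ⟨h, hsep.1 hs⟩] at hf; norm_num at hf
    · intro hs
      rw [if_neg (by intro hc; exact hs (hsep.2 hc.2))]

/-- membership of `Fp σ` in the realizable set -/
lemma Fp_mem (hn : 4 ≤ n) (σ : Equiv.Perm (ZMod n)) :
    (∀ e ∈ chords n, Fp σ e = 1 ∨ Fp σ e = -1) ∧ (∀ e ∉ chords n, Fp σ e = 1) ∧
      Realizable n (Fp σ) := by
  refine ⟨?_, fun e he => Fp_off_chord he, ?_⟩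
  · intro e _
    rw [Fp]
    split_ifs <;> simp
  · refine ⟨zmap σ, zmap_injective σ, ?_⟩
    intro e he
    induction e using Sym2.inductionOn with
    | hf i j =>
      obtain ⟨hne, _⟩ := u_sign hn (zmap_injective σ) he
      rw [Fp]
      by_cases hu : u (zmap σ) s(i, j) < 0
      · rw [if_pos ⟨he, hu⟩, Real.sign_of_neg hu]; norm_num
      · rw [if_neg (by tauto), Real.sign_of_pos (lt_of_le_of_ne (not_lt.1 hu) (Ne.symm hne))]
        norm_num

end FpDef
section Sorting

variable {n : ℕ} [NeZero n]

/-- the equivalence `Fin n ≃ ZMod n` respecting `val` -/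
def finZMod (n : ℕ) [NeZero n] : Fin n ≃ ZMod n where
  toFun t := ((t : ℕ) : ZMod n)
  invFun x := ⟨x.val, ZMod.val_lt x⟩
  left_inv t := by
    ext; exact ZMod.val_cast_of_lt t.isLt
  right_inv x := by
    simpa using ZMod.natCast_rightInverse x

lemma exists_perm_order (z : ZMod n → ℝ) (hz : Function.Injective z) :
    ∃ σ : Equiv.Perm (ZMod n), ∀ a b, z a < z b ↔ (σ a).val < (σ b).val := by
  classical
  set T : Finset ℝ := Finset.univ.image z with hT
  have hTcard : T.card = n := by
    rw [hT, Finset.card_image_of_injective _ hz, Finset.card_univ, ZMod.card]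
  let oIso := T.orderIsoOfFin hTcard
  let f : ZMod n → Fin n := fun i => oIso.symm ⟨z i, by simp [hT]⟩
  have hord : ∀ a b, z a < z b ↔ f a < f b := by
    intro a b
    simp only [f]
    rw [OrderIso.lt_iff_lt, Subtype.mk_lt_mk]
  have hf : Function.Injective f := by
    intro a b h
    simp only [f] at h
    have := oIso.symm.injective h
    exact hz (by simpa using congrArg Subtype.val this)
  let g : ZMod n → ZMod n := fun i => finZMod n (f i)
  have hg : Function.Injective g := fun a b h => hf ((finZMod n).injective h)
  have hgb : Function.Bijective g := Finite.injective_iff_bijective.1 hg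
  refine ⟨Equiv.ofBijective g hgb, ?_⟩
  intro a b
  have hval : ∀ i, ((Equiv.ofBijective g hgb) i).val = (f i : ℕ) := by
    intro i
    show ((((f i : ℕ)) : ZMod n)).val = (f i : ℕ)
    exact ZMod.val_cast_of_lt (f i).isLt
  rw [hval, hval, hord]
  exact Fin.lt_def

/-- two order-equivalent injective configurations give the same sign of u on chords -/
lemma u_sign_order (hn : 4 ≤ n) {z w : ZMod n → ℝ} (hz : Function.Injective z)
    (hw : Function.Injective w) (hord : ∀ a b, z a < z b ↔ w a < w b)
    {i j : ZMod n} (h : s(i, j) ∈ chords n) :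
    u z s(i, j) < 0 ↔ u w s(i, j) < 0 := by
  obtain ⟨d1, d2, d3, d4, d5, d6⟩ := chord_distinct hn h
  obtain ⟨_, hiffz⟩ := u_sign hn hz h
  obtain ⟨_, hiffw⟩ := u_sign hn hw h
  rw [hiffz, hiffw]
  rw [PP_neg_iff (fun hh => d2 (hz hh.symm)) (fun hh => d4 (hz hh.symm))
      (fun hh => d3 (hz hh.symm)) (fun hh => d5 (hz hh.symm)),
    PP_neg_iff (fun hh => d2 (hw hh.symm)) (fun hh => d4 (hw hh.symm))
      (fun hh => d3 (hw hh.symm)) (fun hh => d5 (hw hh.symm))]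
  rw [hord j i, hord j (i + 1), hord (j + 1) i, hord (j + 1) (i + 1)]

/-- every realizable sign pattern comes from a permutation -/
lemma surj_Fp (hn : 4 ≤ n) {s : Sym2 (ZMod n) → ℤ}
    (h1 : ∀ e ∈ chords n, s e = 1 ∨ s e = -1) (h2 : ∀ e ∉ chords n, s e = 1)
    (h3 : Realizable n s) : ∃ σ : Equiv.Perm (ZMod n), Fp σ = s := by
  obtain ⟨z, hz, hsg⟩ := h3
  obtain ⟨σ, hσ⟩ := exists_perm_order z hz
  have hordz : ∀ a b, z a < z b ↔ zmap σ a < zmap σ b := by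
    intro a b; rw [hσ a b]; exact (Nat.cast_lt).symm
  refine ⟨σ, ?_⟩
  funext e
  by_cases hc : e ∈ chords n
  · induction e using Sym2.inductionOn with
    | hf i j =>
      obtain ⟨hnez, _⟩ := u_sign hn hz hc
      have hiff := u_sign_order hn hz (zmap_injective σ) hordz hc
      have hsg' := hsg _ hc
      rcases h1 _ hc with hs1 | hs1 <;> rw [hs1] <;> rw [hs1] at hsg'
      · have hupos : ¬ u z s(i, j) < 0 := by
          intro hneg
          rw [Real.sign_of_neg hneg] at hsg'
          norm_num at hsg'
        rw [Fp, if_neg (by rw [← hiff]; tauto)]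
      · have huneg : u z s(i, j) < 0 := by
          rcases lt_trichotomy (u z s(i, j)) 0 with h | h | h
          · exact h
          · exact absurd h hnez
          · rw [Real.sign_of_pos h] at hsg'; norm_num at hsg'
        rw [Fp, if_pos ⟨hc, hiff.1 huneg⟩]
  · rw [Fp_off_chord hc, (h2 _ hc).symm]

end Sorting
section Invariance

variable {n : ℕ} [NeZero n]

lemma u_neg_iff_sepC (hn : 4 ≤ n) (σ : Equiv.Perm (ZMod n)) {i j : ZMod n}
    (h : s(i, j) ∈ chords n) :
    u (zmap σ) s(i, j) < 0 ↔ SepC (σ i) (σ (i + 1)) (σ j) (σ (j + 1)) := by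
  obtain ⟨d1, d2, d3, d4, d5, d6⟩ := chord_distinct hn h
  obtain ⟨hne, hiff⟩ := u_sign hn (zmap_injective σ) h
  rw [hiff]
  exact (sepC_iff_PP (fun hh => d1 (σ.injective hh)) (fun hh => d2 (σ.injective hh))
    (fun hh => d3 (σ.injective hh)) (fun hh => d4 (σ.injective hh))
    (fun hh => d5 (σ.injective hh)) (fun hh => d6 (σ.injective hh))).symm

/-- `Fp` is invariant under the dihedral action on values -/
lemma Fp_dihedral (hn : 4 ≤ n) {σ τ : Equiv.Perm (ZMod n)} {c : ZMod n}
    (hrel : (∀ x, τ x = c + σ x) ∨ (∀ x, τ x = c - σ x)) : Fp τ = Fp σ := by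
  funext e
  by_cases hc : e ∈ chords n
  · induction e using Sym2.inductionOn with
    | hf i j =>
      have key : (u (zmap τ) s(i, j) < 0 ↔ u (zmap σ) s(i, j) < 0) := by
        rw [u_neg_iff_sepC hn σ hc, u_neg_iff_sepC hn τ hc]
        obtain ⟨d1, d2, d3, d4, d5, d6⟩ := chord_distinct hn hc
        rcases hrel with hrel | hrel
        · simp only [hrel]
          exact sepC_shift c _ _ _ _
        · simp only [hrel, sub_eq_add_neg]
          rw [sepC_shift c _ _ _ _]
          exact sepC_neg (fun hh => d1 (σ.injective hh)) (fun hh => d2 (σ.injective hh))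
            (fun hh => d3 (σ.injective hh)) (fun hh => d4 (σ.injective hh))
            (fun hh => d5 (σ.injective hh)) (fun hh => d6 (σ.injective hh))
      rw [Fp, Fp]
      by_cases hu : u (zmap σ) s(i, j) < 0
      · rw [if_pos ⟨hc, key.2 hu⟩, if_pos ⟨hc, hu⟩]
      · rw [if_neg (by tauto), if_neg (by tauto)]
  · rw [Fp_off_chord hc, Fp_off_chord hc]

end Invariance
section Core

/-- propositional helpers (proved on abstract atoms so that `tauto` is fast) -/
lemma xor_iff_conv {A B C D : Prop} (h : Xor' A B ↔ Xor' C D) : (A ↔ B) ↔ (C ↔ D) := by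
  simp only [Xor', xor_def] at h; tauto

lemma iff_chain {A1 A2 A3 B1 B2 B3 : Prop} (h1 : (A1 ↔ A3) ↔ (B1 ↔ B3))
    (h2 : (A1 ↔ A2) ↔ (B1 ↔ B2)) : (A2 ↔ A3) ↔ (B2 ↔ B3) := by tauto

lemma iff_chain' {A1 A2 A3 B1 B2 B3 : Prop} (h1 : (A1 ↔ A3) ↔ (B1 ↔ B3))
    (h2 : (A2 ↔ A3) ↔ (B2 ↔ B3)) : (A1 ↔ A2) ↔ (B1 ↔ B2) := by tauto

variable {n : ℕ} [NeZero n]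

/-- Step 1: relative sides w.r.t. an edge chord transfer between two permutations
with the same crossing pattern. -/
lemma same_transfer (hn : 4 ≤ n) (σ τ : Equiv.Perm (ZMod n))
    (hK : ∀ i j : ZMod n, s(i, j) ∈ chords n →
      (SepC (σ i) (σ (i + 1)) (σ j) (σ (j + 1)) ↔
        SepC (τ i) (τ (i + 1)) (τ j) (τ (j + 1))))
    (i : ZMod n) : ∀ k l : ZMod n, k ≠ i → k ≠ i + 1 → l ≠ i → l ≠ i + 1 →
    ((CycBtw (σ i) (σ k) (σ (i + 1)) ↔ CycBtw (σ i) (σ l) (σ (i + 1))) ↔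
      (CycBtw (τ i) (τ k) (τ (i + 1)) ↔ CycBtw (τ i) (τ l) (τ (i + 1)))) := by
  have claim : ∀ v : ℕ, 2 ≤ v → v ≤ n - 1 →
      ((CycBtw (σ i) (σ (i + (v : ZMod n))) (σ (i + 1)) ↔
        CycBtw (σ i) (σ (i + ((2 : ℕ) : ZMod n))) (σ (i + 1))) ↔
       (CycBtw (τ i) (τ (i + (v : ZMod n))) (τ (i + 1)) ↔
        CycBtw (τ i) (τ (i + ((2 : ℕ) : ZMod n))) (τ (i + 1)))) := by
    intro v hv2
    induction v, hv2 using Nat.le_induction with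
    | base => intro _; norm_num
    | succ v hv2 IH =>
      intro hv1
      have hIH := IH (by omega)
      have hvlt : v < n := by omega
      have hchord : s(i, i + (v : ZMod n)) ∈ chords n := by
        rw [mem_chords_iff hn]
        have : i + (v : ZMod n) - i = (v : ZMod n) := by ring
        rw [this, ZMod.val_cast_of_lt hvlt]
        omega
      have hx := hK i (i + (v : ZMod n)) hchord
      have hcast : i + (v : ZMod n) + 1 = i + ((v + 1 : ℕ) : ZMod n) := by
        push_cast; ring
      rw [hcast] at hx
      unfold SepC at hx
      exact iff_chain hIH (xor_iff_conv hx)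
  intro k l hk1 hk2 hl1 hl2
  have hkv : 2 ≤ (k - i).val ∧ (k - i).val ≤ n - 1 := by
    have h0 : (k - i).val ≠ 0 := fun h =>
      hk1 (sub_eq_zero.1 (eq_of_val_eq (by simpa using h)))
    have h1 : (k - i).val ≠ 1 := by
      intro h
      have := (val_eq_one_iff hn).1 h
      exact hk2 (by rw [← this]; ring)
    have := ZMod.val_lt (k - i)
    omega
  have hlv : 2 ≤ (l - i).val ∧ (l - i).val ≤ n - 1 := by
    have h0 : (l - i).val ≠ 0 := fun h =>
      hl1 (sub_eq_zero.1 (eq_of_val_eq (by simpa using h)))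
    have h1 : (l - i).val ≠ 1 := by
      intro h
      have := (val_eq_one_iff hn).1 h
      exact hl2 (by rw [← this]; ring)
    have := ZMod.val_lt (l - i)
    omega
  have hkeq : i + (((k - i).val : ℕ) : ZMod n) = k := by
    rw [ZMod.natCast_rightInverse (k - i)]; ring
  have hleq : i + (((l - i).val : ℕ) : ZMod n) = l := by
    rw [ZMod.natCast_rightInverse (l - i)]; ring
  have c1 := claim (k - i).val hkv.1 hkv.2
  have c2 := claim (l - i).val hlv.1 hlv.2
  rw [hkeq] at c1
  rw [hleq] at c2
  exact iff_chain' c1 c2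

end Core
section Core2

lemma xor_iff_conv' {A B C D : Prop} (h : (A ↔ B) ↔ (C ↔ D)) : Xor' A B ↔ Xor' C D := by
  simp only [Xor', xor_def]; tauto

variable {n : ℕ} [NeZero n]

/-- Step 2: separation of the corner pair `{l-1, l+1}` by the chord `{k, l}` transfers. -/
lemma corner_transfer (hn : 4 ≤ n) (σ τ : Equiv.Perm (ZMod n))
    (hK : ∀ i j : ZMod n, s(i, j) ∈ chords n →
      (SepC (σ i) (σ (i + 1)) (σ j) (σ (j + 1)) ↔
        SepC (τ i) (τ (i + 1)) (τ j) (τ (j + 1))))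
    (l k : ZMod n) (h1 : k ≠ l - 1) (h2 : k ≠ l) (h3 : k ≠ l + 1) :
    (SepC (σ k) (σ l) (σ (l - 1)) (σ (l + 1)) ↔
     SepC (τ k) (τ l) (τ (l - 1)) (τ (l + 1))) := by
  have hone := one_ne_zero' hn
  have htwo := two_ne_zero' hn
  -- label distinctness
  have g1 : l - 1 ≠ l := fun h => hone (by linear_combination -h)
  have g2 : l ≠ l + 1 := fun h => hone (by linear_combination -h)
  have g3 : l - 1 ≠ l + 1 := fun h => htwo (by linear_combination -h)
  have hl1 : l - 1 + 1 = l := by ring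
  -- position distinctness, for σ and τ
  have dist : ∀ ρ : Equiv.Perm (ZMod n),
      ρ k ≠ ρ (l - 1) ∧ ρ k ≠ ρ l ∧ ρ k ≠ ρ (l + 1) ∧ ρ (l - 1) ≠ ρ l ∧
      ρ (l - 1) ≠ ρ (l + 1) ∧ ρ l ≠ ρ (l + 1) := by
    intro ρ
    exact ⟨fun h => h1 (ρ.injective h), fun h => h2 (ρ.injective h),
      fun h => h3 (ρ.injective h), fun h => g1 (ρ.injective h),
      fun h => g3 (ρ.injective h), fun h => g2 (ρ.injective h)⟩
  obtain ⟨s1, s2, s3, s4, s5, s6⟩ := dist σ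
  obtain ⟨t1, t2, t3, t4, t5, t6⟩ := dist τ
  -- T1 : pairing {k, l-1} | {l, l+1} transfers (it is separation by the edge chord e_l)
  have T1 : SepC (σ k) (σ (l - 1)) (σ l) (σ (l + 1)) ↔
      SepC (τ k) (τ (l - 1)) (τ l) (τ (l + 1)) := by
    rw [sepC_swap s1 s2 s3 s4 s5 s6,
      sepC_swap t1 t2 t3 t4 t5 t6]
    have hst := same_transfer hn σ τ hK l k (l - 1) h2 h3 g1 g3
    unfold SepC
    exact xor_iff_conv' hst
  -- T2 : pairing {k, l+1} | {l-1, l} transfers (separation by the edge chord e_{l-1})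
  have T2 : SepC (σ k) (σ (l + 1)) (σ (l - 1)) (σ l) ↔
      SepC (τ k) (τ (l + 1)) (τ (l - 1)) (τ l) := by
    rw [sepC_swap s3 s1 s2 s5.symm s6.symm s4,
      sepC_swap t3 t1 t2 t5.symm t6.symm t4]
    have hst := same_transfer hn σ τ hK (l - 1) k (l + 1) h1
      (by rw [hl1]; exact h2) g3.symm (by rw [hl1]; exact g2.symm)
    rw [hl1] at hst
    unfold SepC
    exact xor_iff_conv' hst
  -- assemble via the exactly-one-of-three principle
  rw [sepC_one_of_three s1 s2 s3 s4 s5 s6, sepC_one_of_three t1 t2 t3 t4 t5 t6]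
  exact and_congr (not_congr T1) (not_congr T2)

end Core2
section Core3

variable {n : ℕ} [NeZero n]

/-- Step 3: relative sides w.r.t. an arbitrary chord `{a,b}` transfer. -/
lemma chordAll_transfer (hn : 4 ≤ n) (σ τ : Equiv.Perm (ZMod n))
    (hK : ∀ i j : ZMod n, s(i, j) ∈ chords n →
      (SepC (σ i) (σ (i + 1)) (σ j) (σ (j + 1)) ↔
        SepC (τ i) (τ (i + 1)) (τ j) (τ (j + 1))))
    (a b : ZMod n) (hab : a ≠ b) :
    ∀ k l : ZMod n, k ≠ a → k ≠ b → l ≠ a → l ≠ b →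
    ((CycBtw (σ a) (σ k) (σ b) ↔ CycBtw (σ a) (σ l) (σ b)) ↔
     (CycBtw (τ a) (τ k) (τ b) ↔ CycBtw (τ a) (τ l) (τ b))) := by
  have hone := one_ne_zero' hn
  set vb := (b - a).val with hvb
  have hb : a + ((vb : ℕ) : ZMod n) = b := by
    rw [hvb, ZMod.natCast_rightInverse (b - a)]; ring
  have hvb1 : 1 ≤ vb := val_pos_of_ne (sub_ne_zero.2 hab.symm)
  have hvbn : vb ≤ n - 1 := by
    have := ZMod.val_lt (b - a); omega
  set v0 : ℕ := if vb = 1 then 2 else 1 with hv0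
  have hv01 : 1 ≤ v0 ∧ v0 ≤ n - 1 ∧ v0 ≠ vb := by
    rw [hv0]; split_ifs with h <;> omega
  have hne_a : ∀ v : ℕ, 1 ≤ v → v ≤ n - 1 → a + (v : ZMod n) ≠ a := by
    intro v h1 h2 h
    have h' : ((v : ℕ) : ZMod n) = 0 := by linear_combination h
    have h'' := congrArg ZMod.val h'
    rw [ZMod.val_cast_of_lt (by omega)] at h''
    simp [ZMod.val_zero] at h''
    omega
  have heq_b : ∀ v : ℕ, v ≤ n - 1 → (a + (v : ZMod n) = b ↔ v = vb) := by
    intro v h2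
    constructor
    · intro h
      have h' : ((v : ℕ) : ZMod n) = b - a := by linear_combination h
      have h'' := congrArg ZMod.val h'
      rw [ZMod.val_cast_of_lt (by omega)] at h''
      omega
    · intro h; rw [h, hb]
  have claim : ∀ v : ℕ, 1 ≤ v → v ≤ n - 1 → v ≠ vb →
      ((CycBtw (σ a) (σ (a + (v : ZMod n))) (σ b) ↔
        CycBtw (σ a) (σ (a + ((v0 : ℕ) : ZMod n))) (σ b)) ↔
       (CycBtw (τ a) (τ (a + (v : ZMod n))) (τ b) ↔
        CycBtw (τ a) (τ (a + ((v0 : ℕ) : ZMod n))) (τ b))) := by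
    intro v
    induction v using Nat.strong_induction_on with
    | _ v IH =>
      intro hv1 hvn hvvb
      by_cases hvv0 : v = v0
      · subst hvv0; simp
      · have hv2 : 2 ≤ v := by
          rcases Nat.lt_or_ge v 2 with h | h
          · exfalso
            have hv1' : v = 1 := by omega
            by_cases hb1 : vb = 1
            · exact hvvb (by omega)
            · rw [hv0, if_neg hb1] at hvv0; omega
          · exact h
        obtain ⟨w, rfl⟩ : ∃ w, v = w + 1 := ⟨v - 1, by omega⟩
        by_cases hwvb : w = vb
        · -- corner case at b
          have hvb2 : 2 ≤ vb := by
            rcases Nat.lt_or_ge vb 2 with h | h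
            · exfalso
              have hb1 : vb = 1 := by omega
              rw [hv0, if_pos hb1] at hvv0
              omega
            · exact h
          obtain ⟨u, rfl⟩ : ∃ u, w = u + 1 := ⟨w - 1, by omega⟩
          have hvbu : vb = u + 1 := hwvb.symm
          have hIH := IH u (by omega) (by omega) (by omega) (by omega)
          have hc1 : a ≠ b - 1 := by
            intro h
            have : a + ((1 : ℕ) : ZMod n) = b := by push_cast; rw [h]; ring
            rw [heq_b 1 (by omega)] at this
            omega
          have hc3 : a ≠ b + 1 := by
            intro h
            have hq : a + (((n - 1 : ℕ)) : ZMod n) = b := by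
              have hcast : ((n - 1 : ℕ) : ZMod n) = -1 := by
                have : ((n - 1 : ℕ) : ZMod n) = (n : ℕ) - 1 := by push_cast [(by omega : 1 ≤ n)]; ring
                rw [this, ZMod.natCast_self]; ring
              rw [hcast, h]; ring
            rw [heq_b (n - 1) (by omega)] at hq
            omega
          have C := corner_transfer hn σ τ hK b a hc1 hab hc3
          have e1 : b - 1 = a + ((u : ℕ) : ZMod n) := by
            rw [← hb, hvbu]; push_cast; ring
          have e2 : b + 1 = a + ((u + 1 + 1 : ℕ) : ZMod n) := by
            rw [← hb, hvbu]; push_cast; ring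
          rw [e1, e2] at C
          unfold SepC at C
          exact iff_chain hIH (xor_iff_conv C)
        · -- edge case
          have hIH := IH w (by omega) (by omega) (by omega) hwvb
          set m := a + ((w : ℕ) : ZMod n) with hm
          have hm1 : m + 1 = a + ((w + 1 : ℕ) : ZMod n) := by rw [hm]; push_cast; ring
          have hma : a ≠ m := (hne_a w (by omega) (by omega)).symm
          have hm1a : a ≠ m + 1 := by rw [hm1]; exact (hne_a (w + 1) (by omega) (by omega)).symm
          have hmb : b ≠ m := by
            intro h; rw [hm] at h; exact hwvb ((heq_b w (by omega)).1 h.symm)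
          have hm1b : b ≠ m + 1 := by
            intro h; rw [hm1] at h; exact hvvb ((heq_b (w + 1) (by omega)).1 h.symm)
          have hedge := same_transfer hn σ τ hK m a b hma hm1a hmb hm1b
          have X1 : SepC (σ m) (σ (m + 1)) (σ a) (σ b) ↔
              SepC (τ m) (τ (m + 1)) (τ a) (τ b) := by
            unfold SepC; exact xor_iff_conv' hedge
          have hmm1 : m ≠ m + 1 := fun h => hone (by linear_combination -h)
          have dst : ∀ ρ : Equiv.Perm (ZMod n), ρ a ≠ ρ b ∧ ρ a ≠ ρ m ∧ ρ a ≠ ρ (m + 1) ∧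
              ρ b ≠ ρ m ∧ ρ b ≠ ρ (m + 1) ∧ ρ m ≠ ρ (m + 1) := fun ρ =>
            ⟨fun h => hab (ρ.injective h), fun h => hma.symm (ρ.injective h.symm),
             fun h => hm1a.symm (ρ.injective h.symm), fun h => hmb.symm (ρ.injective h.symm),
             fun h => hm1b.symm (ρ.injective h.symm), fun h => hmm1 (ρ.injective h)⟩
          obtain ⟨p1, p2, p3, p4, p5, p6⟩ := dst σ
          obtain ⟨q1, q2, q3, q4, q5, q6⟩ := dst τ
          have X2 : SepC (σ a) (σ b) (σ m) (σ (m + 1)) ↔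
              SepC (τ a) (τ b) (τ m) (τ (m + 1)) := by
            rw [sepC_swap p1 p2 p3 p4 p5 p6, sepC_swap q1 q2 q3 q4 q5 q6]
            exact X1
          rw [hm1] at X2
          unfold SepC at X2
          rw [hm] at X2
          exact iff_chain hIH (xor_iff_conv X2)
  intro k l hka hkb hla hlb
  have hkv : 1 ≤ (k - a).val ∧ (k - a).val ≤ n - 1 ∧ (k - a).val ≠ vb := by
    refine ⟨val_pos_of_ne (sub_ne_zero.2 hka), by have := ZMod.val_lt (k - a); omega, ?_⟩
    intro h
    apply hkb
    have : a + (((k - a).val : ℕ) : ZMod n) = k := by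
      rw [ZMod.natCast_rightInverse (k - a)]; ring
    rw [h] at this; rw [← this, hb]
  have hlv : 1 ≤ (l - a).val ∧ (l - a).val ≤ n - 1 ∧ (l - a).val ≠ vb := by
    refine ⟨val_pos_of_ne (sub_ne_zero.2 hla), by have := ZMod.val_lt (l - a); omega, ?_⟩
    intro h
    apply hlb
    have : a + (((l - a).val : ℕ) : ZMod n) = l := by
      rw [ZMod.natCast_rightInverse (l - a)]; ring
    rw [h] at this; rw [← this, hb]
  have c1 := claim (k - a).val hkv.1 hkv.2.1 hkv.2.2
  have c2 := claim (l - a).val hlv.1 hlv.2.1 hlv.2.2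
  have hkeq : a + (((k - a).val : ℕ) : ZMod n) = k := by
    rw [ZMod.natCast_rightInverse (k - a)]; ring
  have hleq : a + (((l - a).val : ℕ) : ZMod n) = l := by
    rw [ZMod.natCast_rightInverse (l - a)]; ring
  rw [hkeq] at c1
  rw [hleq] at c2
  exact iff_chain' c1 c2

end Core3
section Core4

variable {n : ℕ} [NeZero n]

/-- Step 4a: positions are adjacent iff all other points are on the same side. -/
lemma adj_iff_allsame (hn : 4 ≤ n) (ρ : Equiv.Perm (ZMod n)) (k l : ZMod n) (hkl : k ≠ l) :
    (ρ l = ρ k + 1 ∨ ρ k = ρ l + 1) ↔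
    (∀ m m' : ZMod n, m ≠ k → m ≠ l → m' ≠ k → m' ≠ l →
      (CycBtw (ρ k) (ρ m) (ρ l) ↔ CycBtw (ρ k) (ρ m') (ρ l))) := by
  have hone := one_ne_zero' hn
  have hPQ : ρ k ≠ ρ l := fun h => hkl (ρ.injective h)
  have hd1 : 1 ≤ (ρ l - ρ k).val := val_pos_of_ne (sub_ne_zero.2 hPQ.symm)
  have hdn : (ρ l - ρ k).val < n := ZMod.val_lt _
  constructor
  · rintro (h | h)
    · -- ρ l = ρ k + 1 : interval empty
      have hno : ∀ x : ZMod n, ¬ CycBtw (ρ k) x (ρ l) := by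
        intro x ⟨hx1, hx2⟩
        rw [h, show ρ k + 1 - ρ k = 1 by ring, val_one' hn] at hx2
        omega
      intro m m' _ _ _ _
      simp [hno (ρ m), hno (ρ m')]
    · -- ρ k = ρ l + 1 : interval is everything else
      have hall : ∀ m : ZMod n, m ≠ k → m ≠ l → CycBtw (ρ k) (ρ m) (ρ l) := by
        intro m hmk hml
        have hx1 : ρ m ≠ ρ k := fun hh => hmk (ρ.injective hh)
        have hx2 : ρ m ≠ ρ l := fun hh => hml (ρ.injective hh)
        constructor
        · exact val_pos_of_ne (sub_ne_zero.2 hx1)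
        · rw [show ρ l - ρ k = -1 by rw [h]; ring, val_neg_one hn]
          have hlt := ZMod.val_lt (ρ m - ρ k)
          have : (ρ m - ρ k).val ≠ n - 1 := by
            intro hh
            have : ρ m - ρ k = -1 := eq_of_val_eq (by rw [hh, val_neg_one hn])
            apply hx2
            rw [sub_eq_iff_eq_add] at this
            rw [this, h]; ring
          omega
      intro m m' hm1 hm2 hm3 hm4
      simp [hall m hm1 hm2, hall m' hm3 hm4]
  · -- contrapositive
    intro hsame
    by_contra hadj
    push_neg at hadj
    obtain ⟨ha1, ha2⟩ := hadj
    have hd2 : (ρ l - ρ k).val ≠ 1 := by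
      intro hh
      have h1 : ρ l - ρ k = 1 := (val_eq_one_iff hn).1 hh
      rw [sub_eq_iff_eq_add] at h1
      exact ha1 (by rw [h1]; ring)
    have hdn1 : (ρ l - ρ k).val ≠ n - 1 := by
      intro hh
      apply ha2
      have : ρ l - ρ k = -1 := eq_of_val_eq (by rw [hh, val_neg_one hn])
      rw [sub_eq_iff_eq_add] at this
      rw [this]; ring
    set d := (ρ l - ρ k).val with hd
    have hdeq : ρ l - ρ k = ((d : ℕ) : ZMod n) := (ZMod.natCast_rightInverse _).symm
    -- witnesses
    set m := ρ.symm (ρ k + 1) with hm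
    set m' := ρ.symm (ρ l + 1) with hm'
    have hρm : ρ m = ρ k + 1 := by rw [hm]; exact ρ.apply_symm_apply _
    have hρm' : ρ m' = ρ l + 1 := by rw [hm']; exact ρ.apply_symm_apply _
    have hmk : m ≠ k := fun hh => hone (by
      have : ρ k + 1 = ρ k := by rw [← hρm, hh]
      linear_combination this)
    have hml : m ≠ l := by
      intro hh
      apply hd2
      have h1 : ρ l = ρ k + 1 := by rw [← hρm, hh]
      rw [hd, show ρ l - ρ k = 1 by rw [h1]; ring, val_one' hn]
    have hm'k : m' ≠ k := by
      intro hh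
      apply hdn1
      have h1 : ρ k = ρ l + 1 := by rw [← hρm', hh]
      rw [hd, show ρ l - ρ k = -1 by rw [h1]; ring, val_neg_one hn]
    have hm'l : m' ≠ l := fun hh => hone (by
      have : ρ l + 1 = ρ l := by rw [← hρm', hh]
      linear_combination this)
    have hyes : CycBtw (ρ k) (ρ m) (ρ l) := by
      rw [hρm]
      constructor
      · rw [show ρ k + 1 - ρ k = 1 by ring, val_one' hn]; omega
      · rw [show ρ k + 1 - ρ k = 1 by ring, val_one' hn]; omega
    have hno : ¬ CycBtw (ρ k) (ρ m') (ρ l) := by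
      rw [hρm']
      intro ⟨hx1, hx2⟩
      have : ρ l + 1 - ρ k = ((d + 1 : ℕ) : ZMod n) := by
        push_cast
        rw [← hdeq]; ring
      rw [this, ZMod.val_cast_of_lt (by omega)] at hx2
      omega
    exact hno ((hsame m m' hmk hml hm'k hm'l).1 hyes)

/-- Step 4b: adjacency of positions transfers. -/
lemma adj_transfer (hn : 4 ≤ n) (σ τ : Equiv.Perm (ZMod n))
    (hK : ∀ i j : ZMod n, s(i, j) ∈ chords n →
      (SepC (σ i) (σ (i + 1)) (σ j) (σ (j + 1)) ↔
        SepC (τ i) (τ (i + 1)) (τ j) (τ (j + 1))))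
    (k l : ZMod n) (hkl : k ≠ l) :
    (σ l = σ k + 1 ∨ σ k = σ l + 1) ↔ (τ l = τ k + 1 ∨ τ k = τ l + 1) := by
  rw [adj_iff_allsame hn σ k l hkl, adj_iff_allsame hn τ k l hkl]
  constructor <;> intro h m m' h1 h2 h3 h4
  · exact (chordAll_transfer hn σ τ hK k l hkl m m' h1 h2 h3 h4).1 (h m m' h1 h2 h3 h4)
  · exact (chordAll_transfer hn σ τ hK k l hkl m m' h1 h2 h3 h4).2 (h m m' h1 h2 h3 h4)

/-- Step 5: the two permutations differ by a dihedral symmetry. -/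
lemma dihedral_of_sep (hn : 4 ≤ n) (σ τ : Equiv.Perm (ZMod n))
    (hK : ∀ i j : ZMod n, s(i, j) ∈ chords n →
      (SepC (σ i) (σ (i + 1)) (σ j) (σ (j + 1)) ↔
        SepC (τ i) (τ (i + 1)) (τ j) (τ (j + 1)))) :
    ∃ c : ZMod n, (∀ x, τ x = c + σ x) ∨ (∀ x, τ x = c - σ x) := by
  have hone := one_ne_zero' hn
  have htwo := two_ne_zero' hn
  set π : ZMod n → ZMod n := fun p => τ (σ.symm p) with hπ
  have hπinj : Function.Injective π := fun x y h => σ.symm.injective (τ.injective h)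
  have hadj : ∀ p q : ZMod n, p ≠ q →
      ((q = p + 1 ∨ p = q + 1) ↔ (π q = π p + 1 ∨ π p = π q + 1)) := by
    intro p q hpq
    have h := adj_transfer hn σ τ hK (σ.symm p) (σ.symm q)
      (fun hh => hpq (by simpa using congrArg σ hh))
    simpa [hπ] using h
  have h01 := hadj 0 1 (fun h => hone h.symm)
  have hstart : π 1 = π 0 + 1 ∨ π 0 = π 1 + 1 := h01.1 (Or.inl (by ring))
  obtain ⟨ε, hε1, hε2⟩ : ∃ ε : ZMod n, π 1 = π 0 + ε ∧ (ε = 1 ∨ ε = -1) := by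
    rcases hstart with h | h
    · exact ⟨1, h, Or.inl rfl⟩
    · exact ⟨-1, by rw [h]; ring, Or.inr rfl⟩
  have main : ∀ s : ℕ, π ((s : ℕ) : ZMod n) = π 0 + ε * ((s : ℕ) : ZMod n) ∧
      π ((s + 1 : ℕ) : ZMod n) = π 0 + ε * ((s + 1 : ℕ) : ZMod n) := by
    intro s
    induction s with
    | zero =>
      constructor
      · push_cast; ring_nf
      · push_cast; rw [hε1]; ring
    | succ s IH =>
      refine ⟨IH.2, ?_⟩
      have hne : ((s + 1 : ℕ) : ZMod n) ≠ ((s + 2 : ℕ) : ZMod n) := by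
        intro h
        apply hone
        push_cast at h
        linear_combination -h
      have hstep := (hadj _ _ hne).1 (Or.inl (by push_cast; ring))
      have hcast2 : ((s + 1 + 1 : ℕ) : ZMod n) = ((s + 2 : ℕ) : ZMod n) := by push_cast; ring
      rw [hcast2]
      have hs2s : ((s + 2 : ℕ) : ZMod n) = ((s : ℕ) : ZMod n) → False := by
        intro h
        apply htwo
        push_cast at h
        linear_combination h
      rcases hε2 with hε | hε
      · rcases hstep with h | h
        · rw [h, IH.2, hε]; push_cast; ring
        · exfalso
          have h2 : π ((s + 2 : ℕ) : ZMod n) = π ((s + 1 : ℕ) : ZMod n) - 1 := by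
            rw [h]; ring
          have : π ((s + 2 : ℕ) : ZMod n) = π ((s : ℕ) : ZMod n) := by
            rw [h2, IH.2, IH.1, hε]; push_cast; ring
          exact hs2s (hπinj this)
      · rcases hstep with h | h
        · exfalso
          have : π ((s + 2 : ℕ) : ZMod n) = π ((s : ℕ) : ZMod n) := by
            rw [h, IH.2, IH.1, hε]; push_cast; ring
          exact hs2s (hπinj this)
        · have hval : π ((s + 2 : ℕ) : ZMod n) = π ((s + 1 : ℕ) : ZMod n) - 1 := by
            rw [h]; ring
          rw [hval, IH.2, hε]; push_cast; ring
  have hAll : ∀ x : ZMod n, π x = π 0 + ε * x := by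
    intro x
    have := (main x.val).1
    rwa [ZMod.natCast_rightInverse x] at this
  have hτ : ∀ x : ZMod n, τ x = π 0 + ε * σ x := by
    intro x
    have := hAll (σ x)
    simpa [hπ] using this
  rcases hε2 with hε | hε
  · exact ⟨π 0, Or.inl fun x => by rw [hτ x, hε]; ring⟩
  · exact ⟨π 0, Or.inr fun x => by rw [hτ x, hε]; ring⟩

end Core4
section Counting

open scoped Classical

variable {n : ℕ} [NeZero n]

lemma Fp_eq_imp_sep (hn : 4 ≤ n) {σ τ : Equiv.Perm (ZMod n)} (h : Fp σ = Fp τ) :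
    ∀ i j : ZMod n, s(i, j) ∈ chords n →
      (SepC (σ i) (σ (i + 1)) (σ j) (σ (j + 1)) ↔
        SepC (τ i) (τ (i + 1)) (τ j) (τ (j + 1))) := by
  intro i j hc
  rw [← (Fp_on_chord hn hc).1, ← (Fp_on_chord hn (σ := τ) hc).1, h]

/-- the dihedral subgroup as a finset -/
noncomputable def Dfin (n : ℕ) [NeZero n] : Finset (Equiv.Perm (ZMod n)) :=
  (Finset.univ.image fun c : ZMod n => (Equiv.addLeft c : Equiv.Perm (ZMod n))) ∪
  (Finset.univ.image fun c : ZMod n => (Equiv.subLeft c : Equiv.Perm (ZMod n)))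

lemma Dfin_card (hn : 4 ≤ n) : (Dfin n).card = 2 * n := by
  have htwo := two_ne_zero' hn
  have hinj1 : Function.Injective fun c : ZMod n => (Equiv.addLeft c : Equiv.Perm (ZMod n)) := by
    intro c c' h
    have := congrFun (congrArg (fun (g : Equiv.Perm (ZMod n)) => (g : ZMod n → ZMod n)) h) 0
    simpa using this
  have hinj2 : Function.Injective fun c : ZMod n => (Equiv.subLeft c : Equiv.Perm (ZMod n)) := by
    intro c c' h
    have := congrFun (congrArg (fun (g : Equiv.Perm (ZMod n)) => (g : ZMod n → ZMod n)) h) 0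
    simpa using this
  have hdisj : Disjoint
      (Finset.univ.image fun c : ZMod n => (Equiv.addLeft c : Equiv.Perm (ZMod n)))
      (Finset.univ.image fun c : ZMod n => (Equiv.subLeft c : Equiv.Perm (ZMod n))) := by
    rw [Finset.disjoint_left]
    rintro g hg1 hg2
    obtain ⟨c, _, rfl⟩ := Finset.mem_image.1 hg1
    obtain ⟨c', _, hcc⟩ := Finset.mem_image.1 hg2
    have h0 := congrFun (congrArg (fun (g : Equiv.Perm (ZMod n)) => (g : ZMod n → ZMod n)) hcc) 0
    have h1 := congrFun (congrArg (fun (g : Equiv.Perm (ZMod n)) => (g : ZMod n → ZMod n)) hcc) 1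
    simp [Equiv.subLeft, Equiv.addLeft] at h0 h1
    apply htwo
    rw [h0] at h1
    linear_combination -h1
  rw [Dfin, Finset.card_union_of_disjoint hdisj,
    Finset.card_image_of_injective _ hinj1, Finset.card_image_of_injective _ hinj2,
    Finset.card_univ, ZMod.card]
  ring

lemma fiber_eq (hn : 4 ≤ n) (σ0 : Equiv.Perm (ZMod n)) :
    Finset.univ.filter (fun τ => Fp τ = Fp σ0) = (Dfin n).image (fun g => g * σ0) := by
  ext τ
  simp only [Finset.mem_filter, Finset.mem_univ, true_and, Finset.mem_image]
  constructor
  · intro h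
    obtain ⟨c, hc⟩ := dihedral_of_sep hn σ0 τ (Fp_eq_imp_sep hn h.symm)
    rcases hc with hc | hc
    · refine ⟨Equiv.addLeft c, ?_, ?_⟩
      · rw [Dfin, Finset.mem_union]
        exact Or.inl (Finset.mem_image.2 ⟨c, Finset.mem_univ c, rfl⟩)
      · ext x
        simp [hc x, Equiv.addLeft]
    · refine ⟨Equiv.subLeft c, ?_, ?_⟩
      · rw [Dfin, Finset.mem_union]
        exact Or.inr (Finset.mem_image.2 ⟨c, Finset.mem_univ c, rfl⟩)
      · ext x
        simp [hc x, Equiv.subLeft]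
  · rintro ⟨g, hg, rfl⟩
    rw [Dfin, Finset.mem_union] at hg
    rcases hg with hg | hg
    · obtain ⟨c, _, rfl⟩ := Finset.mem_image.1 hg
      exact Fp_dihedral hn (Or.inl fun x => rfl)
    · obtain ⟨c, _, rfl⟩ := Finset.mem_image.1 hg
      exact Fp_dihedral hn (Or.inr fun x => rfl)

lemma fiber_card (hn : 4 ≤ n) (σ0 : Equiv.Perm (ZMod n)) :
    (Finset.univ.filter (fun τ => Fp τ = Fp σ0)).card = 2 * n := by
  rw [fiber_eq hn σ0, Finset.card_image_of_injective _ (mul_left_injective σ0), Dfin_card hn]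

lemma image_card (hn : 4 ≤ n) :
    (Finset.univ.image (Fp : Equiv.Perm (ZMod n) → Sym2 (ZMod n) → ℤ)).card * (2 * n)
      = Nat.factorial n := by
  have hsum := Finset.card_eq_sum_card_fiberwise
    (f := (Fp : Equiv.Perm (ZMod n) → Sym2 (ZMod n) → ℤ)) (s := Finset.univ)
    (t := Finset.univ.image Fp)
    (fun x _ => Finset.mem_image_of_mem Fp (Finset.mem_univ x))
  have hcards : ∀ b ∈ Finset.univ.image (Fp : Equiv.Perm (ZMod n) → Sym2 (ZMod n) → ℤ),
      (Finset.univ.filter (fun τ => Fp τ = b)).card = 2 * n := by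
    intro b hb
    obtain ⟨σ0, _, rfl⟩ := Finset.mem_image.1 hb
    exact fiber_card hn σ0
  rw [Finset.sum_congr rfl hcards, Finset.sum_const, smul_eq_mul] at hsum
  rw [← hsum, Finset.card_univ, Fintype.card_perm, ZMod.card]

lemma set_eq_image (hn : 4 ≤ n) :
    {s : Sym2 (ZMod n) → ℤ |
      (∀ e ∈ chords n, s e = 1 ∨ s e = -1) ∧ (∀ e ∉ chords n, s e = 1) ∧
      Realizable n s} = ↑(Finset.univ.image (Fp : Equiv.Perm (ZMod n) → Sym2 (ZMod n) → ℤ)) := by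
  ext s
  simp only [Set.mem_setOf_eq, Finset.coe_image, Set.mem_image, Finset.mem_coe]
  constructor
  · rintro ⟨h1, h2, h3⟩
    obtain ⟨σ, hσ⟩ := surj_Fp hn h1 h2 h3
    exact ⟨σ, by simp, hσ⟩
  · rintro ⟨σ, _, rfl⟩
    exact Fp_mem hn σ

end Counting
/-- For `n ≥ 4`, the number of realizable sign patterns is `(n-1)!/2`. -/
theorem card_realizable_sign_patterns (n : ℕ) [NeZero n] (hn : 4 ≤ n) :
    2 * Set.ncard {s : Sym2 (ZMod n) → ℤ |
      (∀ e ∈ chords n, s e = 1 ∨ s e = -1) ∧ (∀ e ∉ chords n, s e = 1) ∧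
      Realizable n s} = Nat.factorial (n - 1) := by
  classical
  rw [set_eq_image hn, Set.ncard_coe_finset]
  have himg := image_card (n := n) hn
  obtain ⟨m, rfl⟩ : ∃ m, n = m + 1 := ⟨n - 1, by omega⟩
  rw [Nat.factorial_succ] at himg
  have hg : (m + 1 - 1) = m := by omega
  rw [hg]
  have h2 : 2 * (Finset.univ.image (Fp : Equiv.Perm (ZMod (m + 1)) → Sym2 (ZMod (m + 1)) → ℤ)).card * (m + 1)
      = Nat.factorial m * (m + 1) := by
    rw [show 2 * (Finset.univ.image (Fp : Equiv.Perm (ZMod (m + 1)) → Sym2 (ZMod (m + 1)) → ℤ)).card * (m + 1)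
        = (Finset.univ.image (Fp : Equiv.Perm (ZMod (m + 1)) → Sym2 (ZMod (m + 1)) → ℤ)).card * (2 * (m + 1)) by ring,
      himg]
    ring
  exact Nat.eq_of_mul_eq_mul_right (Nat.succ_pos m) h2

end M0n
end

section
/- Let n and ℓ be integers with 3 ≤ ℓ ≤ n−2, let z : ZMod n → ℝ be injective, and let τ ∈ Perm(ZMod n) be the transposition exchanging 1 and ℓ. Then the following identity holds: u_{{0,ℓ}}(z ∘ τ) = − u_{{0,ℓ}}(z) · ∏_{e ∈ E, e crosses {0,ℓ}} u_e(z)^{−1}, where the product is over all chords crossing {0, ℓ}. (This is the row v_{n1} ↦ −u_{nℓ} ∏_{kj ≁ nℓ} u_{kj}^{−1} of the monomial map φ_{(1ℓ)}.) -/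
namespace M0n

private lemma cast_inj' (n : ℕ) {A B : ℕ} (hA : A < n) (hB : B < n) :
    (A : ZMod n) = (B : ZMod n) ↔ A = B := by
  rw [ZMod.natCast_eq_natCast_iff', Nat.mod_eq_of_lt hA, Nat.mod_eq_of_lt hB]

private lemma val_cast_sub (n : ℕ) [NeZero n] (X I : ℕ) (hX : X < n) (hI : I < n) :
    ((X : ZMod n) - (I : ZMod n)).val = if I ≤ X then X - I else X + n - I := by
  have h : ((X + (n - I) : ℕ) : ZMod n) = (X : ZMod n) - I := by
    push_cast [Nat.cast_sub hI.le, ZMod.natCast_self]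
    ring
  rw [← h, ZMod.val_natCast]
  rcases le_or_gt I X with h1 | h1
  · have h2 : X + (n - I) = (X - I) + n := by omega
    rw [h2, Nat.add_mod_right, Nat.mod_eq_of_lt (by omega), if_pos h1]
  · rw [Nat.mod_eq_of_lt (by omega), if_neg (by omega)]; omega

private lemma cycBtw_cast (n : ℕ) [NeZero n] (I X J : ℕ) (hI : I < n) (hX : X < n) (hJ : J < n) :
    CycBtw (I : ZMod n) (X : ZMod n) (J : ZMod n) ↔
      0 < (if I ≤ X then X - I else X + n - I) ∧
        (if I ≤ X then X - I else X + n - I) < (if I ≤ J then J - I else J + n - I) := by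
  unfold CycBtw
  rw [val_cast_sub n X I hX hI, val_cast_sub n J I hJ hI]

private lemma telescope (F : ℕ → ℝ) (a b : ℕ) (hab : a ≤ b)
    (h : ∀ i, a ≤ i → i ≤ b → F i ≠ 0) :
    ∏ i ∈ Finset.Ico a b, F (i + 1) / F i = F b / F a := by
  induction b, hab using Nat.le_induction with
  | base => simp [div_self (h a le_rfl le_rfl)]
  | succ b hab ih =>
    rw [Finset.prod_Ico_succ_top hab, ih (fun i h1 h2 => h i h1 (by omega))]
    have h1 := h a le_rfl (by omega)
    have h2 := h b hab (by omega)
    field_simp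

private lemma crossing_set (n ℓ : ℕ) [NeZero n] (hl3 : 3 ≤ ℓ) (hln : ℓ ≤ n - 2) :
    (chords n).filter (fun e => Crosses n e s((0 : ZMod n), (ℓ : ZMod n)))
      = ((Finset.Ico 1 ℓ) ×ˢ (Finset.Ico (ℓ + 1) n)).image
          (fun p : ℕ × ℕ => s((p.1 : ZMod n), (p.2 : ZMod n))) := by
  have hn : 5 ≤ n := by omega
  have h0 : (0 : ZMod n) = ((0 : ℕ) : ZMod n) := by norm_cast
  ext e
  induction e using Sym2.ind with
  | _ k l =>
  simp only [Finset.mem_filter, Finset.mem_image, Finset.mem_product, Finset.mem_Ico,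
    chords, Finset.mem_univ, true_and]
  constructor
  · rintro ⟨-, hcr⟩
    have hk : ((k.val : ℕ) : ZMod n) = k := ZMod.natCast_rightInverse k
    have hl : ((l.val : ℕ) : ZMod n) = l := ZMod.natCast_rightInverse l
    set K := k.val with hK
    set L := l.val with hL
    have hKn : K < n := ZMod.val_lt k
    have hLn : L < n := ZMod.val_lt l
    have h1 := hcr k l ((0:ℕ) : ZMod n) ((ℓ:ℕ) : ZMod n) rfl (by rw [← h0])
    have h2 := hcr l k ((0:ℕ) : ZMod n) ((ℓ:ℕ) : ZMod n) (Sym2.eq_swap) (by rw [← h0])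
    rw [← hk, ← hl] at h1 h2
    rw [cycBtw_cast n K 0 L (by omega) (by omega) (by omega),
        cycBtw_cast n K ℓ L (by omega) (by omega) (by omega),
        Xor', Xor] at h1
    rw [cycBtw_cast n L 0 K (by omega) (by omega) (by omega),
        cycBtw_cast n L ℓ K (by omega) (by omega) (by omega),
        Xor', Xor] at h2
    have key : (1 ≤ K ∧ K < ℓ ∧ ℓ + 1 ≤ L ∧ L < n) ∨
        (1 ≤ L ∧ L < ℓ ∧ ℓ + 1 ≤ K ∧ K < n) := by
      split_ifs at h1 h2 <;> omega
    rcases key with ⟨a, b, c, d⟩ | ⟨a, b, c, d⟩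
    · exact ⟨(K, L), ⟨⟨a, b⟩, c, d⟩, by rw [hk, hl]⟩
    · exact ⟨(L, K), ⟨⟨a, b⟩, c, d⟩, by rw [hk, hl]; exact Sym2.eq_swap⟩
  · rintro ⟨⟨X, Y⟩, ⟨⟨hX1, hX2⟩, hY1, hY2⟩, he⟩
    dsimp only at he hX1 hX2 hY1 hY2
    rw [← he]
    constructor
    · -- IsChord
      intro i j hij
      have e1 : (1 : ZMod n) = ((1 : ℕ) : ZMod n) := by norm_cast
      rcases Sym2.eq_iff.mp hij with ⟨hi, hj⟩ | ⟨hi, hj⟩ <;> rw [← hi, ← hj]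
      · refine ⟨fun h => ?_, fun h => ?_, fun h => ?_⟩
        · rw [e1] at h
          have hv := congrArg ZMod.val h
          rw [ZMod.val_natCast, val_cast_sub n X 1 (by omega) (by omega),
            Nat.mod_eq_of_lt hY2] at hv
          split_ifs at hv <;> omega
        · rw [cast_inj' n hY2 (by omega)] at h; omega
        · rw [show ((X : ZMod n) + 1) = (((X + 1 : ℕ)) : ZMod n) by push_cast; ring,
            cast_inj' n hY2 (by omega)] at h
          omega
      · refine ⟨fun h => ?_, fun h => ?_, fun h => ?_⟩
        · rw [e1] at h
          have hv := congrArg ZMod.val h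
          rw [ZMod.val_natCast, val_cast_sub n Y 1 (by omega) (by omega),
            Nat.mod_eq_of_lt (by omega : X < n)] at hv
          split_ifs at hv <;> omega
        · rw [cast_inj' n (by omega) hY2] at h; omega
        · rw [show ((Y : ZMod n) + 1) = (((Y + 1 : ℕ)) : ZMod n) by push_cast; ring] at h
          have hv := congrArg ZMod.val h
          rw [ZMod.val_natCast, ZMod.val_natCast, Nat.mod_eq_of_lt (by omega : X < n)] at hv
          rcases (by omega : Y + 1 = n ∨ Y + 1 < n) with h2 | h2
          · rw [h2, Nat.mod_self] at hv; omega
          · rw [Nat.mod_eq_of_lt h2] at hv; omega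
    · -- Crosses
      intro i j a b hij hab
      rcases Sym2.eq_iff.mp hij with ⟨hi, hj⟩ | ⟨hi, hj⟩ <;>
        rcases Sym2.eq_iff.mp hab with ⟨ha, hb⟩ | ⟨ha, hb⟩ <;>
          subst hi <;> subst hj <;> subst ha <;> subst hb <;>
      rw [Xor', Xor] <;>
      [ rw [h0, cycBtw_cast n X 0 Y (by omega) (by omega) (by omega),
            cycBtw_cast n X ℓ Y (by omega) (by omega) (by omega)];
        rw [h0, cycBtw_cast n X ℓ Y (by omega) (by omega) (by omega),
            cycBtw_cast n X 0 Y (by omega) (by omega) (by omega)];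
        rw [h0, cycBtw_cast n Y 0 X (by omega) (by omega) (by omega),
            cycBtw_cast n Y ℓ X (by omega) (by omega) (by omega)];
        rw [h0, cycBtw_cast n Y ℓ X (by omega) (by omega) (by omega),
            cycBtw_cast n Y 0 X (by omega) (by omega) (by omega)]] <;>
      split_ifs <;> omega

set_option maxHeartbeats 1000000 in
/-- The row `v_{n1} ↦ -u_{nℓ} ∏_{kj ≁ nℓ} u_{kj}⁻¹` of the monomial map
`φ_{(1ℓ)}`, as an identity of functions of the configuration `z`. -/
theorem monomial_map_row_n_one (n ℓ : ℕ) [NeZero n] (hl3 : 3 ≤ ℓ) (hln : ℓ ≤ n - 2)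
    (z : ZMod n → ℝ) (hz : Function.Injective z) :
    u (fun k => z (Equiv.swap (1 : ZMod n) (ℓ : ZMod n) k))
        s((0 : ZMod n), (ℓ : ZMod n))
      = - u z s((0 : ZMod n), (ℓ : ZMod n)) *
          ∏ e ∈ (chords n).filter
            (fun e => Crosses n e s((0 : ZMod n), (ℓ : ZMod n))), (u z e)⁻¹ := by
  classical
  have hn : 5 ≤ n := by omega
  -- nonvanishing of differences
  have key : ∀ A B : ℕ, A ≤ n → B ≤ n → A ≠ B → (A ≠ 0 ∨ B ≠ n) → (A ≠ n ∨ B ≠ 0) →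
      z ↑A - z ↑B ≠ 0 := by
    intro A B hA hB h1 h2 h3
    refine sub_ne_zero_of_ne fun h => ?_
    have h4 := hz h
    rw [ZMod.natCast_eq_natCast_iff'] at h4
    rcases hA.lt_or_eq with hA' | hA' <;> rcases hB.lt_or_eq with hB' | hB'
    · rw [Nat.mod_eq_of_lt hA', Nat.mod_eq_of_lt hB'] at h4; omega
    · rw [Nat.mod_eq_of_lt hA', hB', Nat.mod_self] at h4; omega
    · rw [hA', Nat.mod_self, Nat.mod_eq_of_lt hB'] at h4; omega
    · omega
  have key0 : ∀ A : ℕ, 1 ≤ A → A < n → z ↑A - z 0 ≠ 0 := by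
    intro A h1 h2
    have := key A 0 (by omega) (by omega) (by omega) (by omega) (by omega)
    simpa using this
  -- inner telescoping product
  have inner : ∀ X : ℕ, 1 ≤ X → X < ℓ →
      ∏ Y ∈ Finset.Ico (ℓ + 1) n, (u z s((X : ZMod n), (Y : ZMod n)))⁻¹
        = ((z ↑X - z ↑(ℓ + 1)) * (z ↑(X + 1) - z 0)) /
            ((z ↑(X + 1) - z ↑(ℓ + 1)) * (z ↑X - z 0)) := by
    intro X hX1 hX2
    set F : ℕ → ℝ := fun Y => ((z ↑X - z ↑Y) / (z ↑(X + 1) - z ↑Y))⁻¹ with hF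
    have hFne : ∀ i, ℓ + 1 ≤ i → i ≤ n → F i ≠ 0 := by
      intro i h1 h2
      simp only [hF, ne_eq, inv_eq_zero, div_eq_zero_iff, not_or]
      exact ⟨key X i (by omega) h2 (by omega) (by omega) (by omega),
        key (X + 1) i (by omega) h2 (by omega) (by omega) (by omega)⟩
    have tele := telescope F (ℓ + 1) n (by omega) hFne
    have step : ∀ Y ∈ Finset.Ico (ℓ + 1) n,
        (u z s((X : ZMod n), (Y : ZMod n)))⁻¹ = F (Y + 1) / F Y := by
      intro Y hY
      simp only [Finset.mem_Ico] at hY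
      have e1 : ((X : ZMod n) + 1) = ((X + 1 : ℕ) : ZMod n) := by push_cast; ring
      have e2 : ((Y : ZMod n) + 1) = ((Y + 1 : ℕ) : ZMod n) := by push_cast; ring
      have n1 := key X Y (by omega) (by omega) (by omega) (by omega) (by omega)
      have n2 := key X (Y + 1) (by omega) (by omega) (by omega) (by omega) (by omega)
      have n3 := key (X + 1) Y (by omega) (by omega) (by omega) (by omega) (by omega)
      have n4 := key (X + 1) (Y + 1) (by omega) (by omega) (by omega) (by omega) (by omega)
      simp only [u, Sym2.lift_mk, hF, e1, e2]
      field_simp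
    rw [Finset.prod_congr rfl step, tele]
    simp only [hF, ZMod.natCast_self]
    have n1 := key X (ℓ + 1) (by omega) (by omega) (by omega) (by omega) (by omega)
    have n2 := key (X + 1) (ℓ + 1) (by omega) (by omega) (by omega) (by omega) (by omega)
    have n3 := key0 X hX1 (by omega)
    have n4 := key0 (X + 1) (by omega) (by omega)
    field_simp
  -- rewrite the crossing product
  have hinj : ∀ p ∈ (Finset.Ico 1 ℓ) ×ˢ (Finset.Ico (ℓ + 1) n),
      ∀ q ∈ (Finset.Ico 1 ℓ) ×ˢ (Finset.Ico (ℓ + 1) n),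
      (fun p : ℕ × ℕ => s((p.1 : ZMod n), (p.2 : ZMod n))) p
        = (fun p : ℕ × ℕ => s((p.1 : ZMod n), (p.2 : ZMod n))) q → p = q := by
    rintro ⟨a, b⟩ hp ⟨c, d⟩ hq h
    simp only [Finset.mem_product, Finset.mem_Ico] at hp hq
    simp only [Prod.mk.injEq]
    rcases Sym2.eq_iff.mp h with ⟨h1, h2⟩ | ⟨h1, h2⟩
    · rw [cast_inj' n (by omega) (by omega)] at h1
      rw [cast_inj' n (by omega) (by omega)] at h2
      exact ⟨h1, h2⟩
    · rw [cast_inj' n (by omega) (by omega)] at h1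
      omega
  rw [crossing_set n ℓ hl3 hln, Finset.prod_image hinj, Finset.prod_product]
  rw [Finset.prod_congr rfl (fun X hX => by
    simp only [Finset.mem_Ico] at hX
    exact inner X hX.1 hX.2)]
  -- outer telescoping product
  set H : ℕ → ℝ := fun i => ((z ↑i - z ↑(ℓ + 1)) / (z ↑i - z 0))⁻¹ with hH
  have hHne : ∀ i, 1 ≤ i → i ≤ ℓ → H i ≠ 0 := by
    intro i h1 h2
    simp only [hH, ne_eq, inv_eq_zero, div_eq_zero_iff, not_or]
    exact ⟨key i (ℓ + 1) (by omega) (by omega) (by omega) (by omega) (by omega),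
      key0 i h1 (by omega)⟩
  have tele := telescope H 1 ℓ (by omega) hHne
  have step : ∀ X ∈ Finset.Ico 1 ℓ,
      ((z ↑X - z ↑(ℓ + 1)) * (z ↑(X + 1) - z 0)) /
          ((z ↑(X + 1) - z ↑(ℓ + 1)) * (z ↑X - z 0)) = H (X + 1) / H X := by
    intro X hX
    simp only [Finset.mem_Ico] at hX
    have n1 := key X (ℓ + 1) (by omega) (by omega) (by omega) (by omega) (by omega)
    have n2 := key (X + 1) (ℓ + 1) (by omega) (by omega) (by omega) (by omega) (by omega)
    have n3 := key0 X (by omega) (by omega)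
    have n4 := key0 (X + 1) (by omega) (by omega)
    simp only [hH]
    field_simp
  rw [Finset.prod_congr rfl step, tele]
  -- evaluate the swap and finish
  have c01 : (0 : ZMod n) ≠ (1 : ZMod n) := by
    have h := cast_inj' n (show 0 < n by omega) (show 1 < n by omega)
    rw [Nat.cast_zero, Nat.cast_one] at h
    rw [Ne, h]; omega
  have c0l : (0 : ZMod n) ≠ ((ℓ : ℕ) : ZMod n) := by
    have h := cast_inj' n (show 0 < n by omega) (show ℓ < n by omega)
    rw [Nat.cast_zero] at h
    rw [Ne, h]; omega
  have c1l : (1 : ZMod n) ≠ ((ℓ : ℕ) : ZMod n) := by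
    have h := cast_inj' n (show 1 < n by omega) (show ℓ < n by omega)
    rw [Nat.cast_one] at h
    rw [Ne, h]; omega
  have cl1 : ((ℓ + 1 : ℕ) : ZMod n) ≠ (1 : ZMod n) := by
    have h := cast_inj' n (show ℓ + 1 < n by omega) (show 1 < n by omega)
    rw [Nat.cast_one] at h
    rw [Ne, h]; omega
  have cll : ((ℓ + 1 : ℕ) : ZMod n) ≠ ((ℓ : ℕ) : ZMod n) := by
    rw [Ne, cast_inj' n (by omega) (by omega)]; omega
  have el1 : ((ℓ : ZMod n) + 1) = ((ℓ + 1 : ℕ) : ZMod n) := by push_cast; ring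
  have s0 : Equiv.swap (1 : ZMod n) (ℓ : ZMod n) 0 = 0 :=
    Equiv.swap_apply_of_ne_of_ne c01 c0l
  have s1 : Equiv.swap (1 : ZMod n) (ℓ : ZMod n) 1 = (ℓ : ZMod n) :=
    Equiv.swap_apply_left _ _
  have sl : Equiv.swap (1 : ZMod n) (ℓ : ZMod n) (ℓ : ZMod n) = 1 :=
    Equiv.swap_apply_right _ _
  have sl1 : Equiv.swap (1 : ZMod n) (ℓ : ZMod n) ((ℓ + 1 : ℕ) : ZMod n)
      = ((ℓ + 1 : ℕ) : ZMod n) := Equiv.swap_apply_of_ne_of_ne cl1 cll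
  simp only [u, Sym2.lift_mk, zero_add, el1, s0, s1, sl, sl1, hH, Nat.cast_one]
  have n1 := key 0 1 (by omega) (by omega) (by omega) (by omega) (by omega)
  have n2 := key 0 ℓ (by omega) (by omega) (by omega) (by omega) (by omega)
  have n3 := key 0 (ℓ + 1) (by omega) (by omega) (by omega) (by omega) (by omega)
  have n4 := key 1 ℓ (by omega) (by omega) (by omega) (by omega) (by omega)
  have n5 := key 1 (ℓ + 1) (by omega) (by omega) (by omega) (by omega) (by omega)
  have n6 := key ℓ (ℓ + 1) (by omega) (by omega) (by omega) (by omega) (by omega)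
  have n7 := key0 1 (by omega) (by omega)
  have n8 := key0 ℓ (by omega) (by omega)
  rw [Nat.cast_zero, Nat.cast_one] at n1
  rw [Nat.cast_zero] at n2 n3
  rw [Nat.cast_one] at n4 n5 n7
  have r3 := sub_ne_zero_of_ne (Ne.symm (sub_ne_zero.mp n3))
  have r4 := sub_ne_zero_of_ne (Ne.symm (sub_ne_zero.mp n4))
  have r5 := sub_ne_zero_of_ne (Ne.symm (sub_ne_zero.mp n5))
  have r6 := sub_ne_zero_of_ne (Ne.symm (sub_ne_zero.mp n6))
  set a := z 0 with ha
  set b := z 1 with hb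
  set c := z ((ℓ : ℕ) : ZMod n) with hc
  set d := z (((ℓ + 1 : ℕ)) : ZMod n) with hd
  field_simp
  ring


end M0n
end
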